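/- arXiv:1602.01661 — 4 statements merged into one kernel-verified Lean document; each statement's English description precedes it below -/
import Mathlib

section
/- A finite group generated by left Engel elements is nilpotent (Baer's theorem, generation version): if G is a finite group generated by a set S such that every element of S is a left n-Engel element of G for some n, then G is nilpotent. -/
set_option linter.unusedSectionVars false

open scoped commutatorElement


/-- Iterated left-normed group commutator `[g, x, x, ..., x]` with `n` copies of `x`. -/
def engel {G : Type} [Group G] (g x : G) : ℕ → G
  | 0 => g
  | n + 1 => ⁅engel g x n, x⁆

namespace EngelProof

open Subgroup

variable {G : Type} [Group G]

lemma engel_map {H : Type} [Group H] (f : G →* H) (g x : G) (n : ℕ) :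
    f (engel g x n) = engel (f g) (f x) n := by
  induction n with
  | zero => rfl
  | succ n ih => rw [engel, engel, map_commutatorElement, ih]

lemma engel_conj {x : G} {n : ℕ} (hn : ∀ g : G, engel g x n = 1) (c : G) :
    ∀ g : G, engel g (c * x * c⁻¹) n = 1 := by
  intro g
  have h2 := engel_map (MulAut.conj c).toMonoidHom (c⁻¹ * g * c) x n
  rw [hn (c⁻¹ * g * c), map_one] at h2
  have e1 : (MulAut.conj c).toMonoidHom (c⁻¹ * g * c) = g := by
    simp [MulAut.conj_apply]
    group
  have e2 : (MulAut.conj c).toMonoidHom x = c * x * c⁻¹ := by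
    simp [MulAut.conj_apply]
  rw [e1, e2] at h2
  exact h2.symm

lemma engel_subgroup {H : Subgroup G} {x : ↥H} {n : ℕ} (hn : ∀ g : G, engel g (x : G) n = 1) :
    ∀ g : ↥H, engel g x n = 1 := by
  intro g
  apply H.subtype_injective
  rw [engel_map, map_one]
  exact hn _

lemma engel_surj {H : Type} [Group H] (f : G →* H) (hf : Function.Surjective f) {x : G} {n : ℕ}
    (hn : ∀ g : G, engel g x n = 1) : ∀ h : H, engel h (f x) n = 1 := by
  intro h
  obtain ⟨g, rfl⟩ := hf h
  rw [← engel_map, hn, map_one]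

lemma engel_mem_of_normal {V : Subgroup G} (hV : V.Normal) {v : G} (hv : v ∈ V) (x : G) (k : ℕ) :
    engel v x k ∈ V := by
  induction k with
  | zero => exact hv
  | succ k ih =>
    have h : engel v x (k + 1) = engel v x k * (x * (engel v x k)⁻¹ * x⁻¹) := by
      rw [engel, commutatorElement_def]
      group
    rw [h]
    exact V.mul_mem ih (hV.conj_mem _ (V.inv_mem ih) x)

lemma exists_last_engel {x v : G} : ∀ (d j : ℕ), engel v x (j + d) = 1 →
    engel v x j ≠ 1 → ∃ k, engel v x k ≠ 1 ∧ engel v x (k + 1) = 1 := by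
  intro d
  induction d with
  | zero => exact fun j hd hj => absurd hd hj
  | succ d ih =>
    intro j hd hj
    by_cases hc : engel v x (j + 1) = 1
    · exact ⟨j, hj, hc⟩
    · exact ih (j + 1) (by rw [show j + 1 + d = j + (d + 1) by omega]; exact hd) hc

/-- The key "trap" chain lemma: if `x` is Engel, `x ∈ M`, and any conjugator bringing a
conjugate of `x` into `M` is itself in `M`, then `M` is everything. -/
lemma trap_lemma {x : G} {n : ℕ} (hx : ∀ g : G, engel g x n = 1) {M : Subgroup G} (hxM : x ∈ M)
    (trap : ∀ h : G, h * x * h⁻¹ ∈ M → h ∈ M) : M = ⊤ := by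
  rw [Subgroup.eq_top_iff']
  intro v
  by_contra hv
  have key : ∀ j, engel v x j ∉ M := by
    intro j
    induction j with
    | zero => exact hv
    | succ j ih =>
      intro hmem
      apply ih
      apply trap
      have h : engel v x j * x * (engel v x j)⁻¹ = engel v x (j + 1) * x := by
        rw [engel, commutatorElement_def]
        group
      rw [h]
      exact M.mul_mem hmem hxM
  exact key n (by rw [hx v]; exact M.one_mem)

lemma mem_normalizer_of_conj_mem [Finite G] {w : G} {D : Subgroup G}
    (h : ∀ d ∈ D, w * d * w⁻¹ ∈ D) : w ∈ Subgroup.normalizer (D : Set G) := by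
  rw [Subgroup.mem_normalizer_iff]
  have hinj : Function.Injective (fun d : D => (⟨w * (d : G) * w⁻¹, h d d.2⟩ : D)) := by
    intro a b hab
    have h2 : w * (a : G) * w⁻¹ = w * (b : G) * w⁻¹ := congrArg Subtype.val hab
    have h3 : (a : G) = b := by
      have := mul_right_cancel h2
      exact mul_left_cancel this
    exact Subtype.ext h3
  have hsurj := Finite.surjective_of_injective hinj
  intro g
  constructor
  · exact fun hg => h g hg
  · intro hg
    obtain ⟨⟨d, hd⟩, hEq⟩ := hsurj ⟨w * g * w⁻¹, hg⟩
    have h2 : w * d * w⁻¹ = w * g * w⁻¹ := congrArg Subtype.val hEq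
    have h3 : d = g := mul_left_cancel (mul_right_cancel h2)
    exact h3 ▸ hd

lemma card_lt_of_lt [Finite G] {A B : Subgroup G} (h : A < B) : Nat.card A < Nat.card B := by
  have hinj : Function.Injective (fun a : A => (⟨(a : G), h.le a.2⟩ : B)) := by
    intro a b hab
    have h2 : (a : G) = b := congrArg (fun t : B => (t : G)) hab
    exact Subtype.ext h2
  have hle : Nat.card A ≤ Nat.card B := Nat.card_le_card_of_injective _ hinj
  rcases lt_or_eq_of_le hle with h1 | h1
  · exact h1
  · exact absurd (Subgroup.eq_of_le_of_card_ge h.le h1.ge) h.ne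

lemma card_lt_of_ne_top [Finite G] {A : Subgroup G} (h : A ≠ ⊤) : Nat.card A < Nat.card G := by
  have := card_lt_of_lt (lt_of_le_of_ne le_top h)
  rwa [Subgroup.card_top] at this

lemma card_quotient_lt [Finite G] {W : Subgroup G} [W.Normal] (h : W ≠ ⊥) :
    Nat.card (G ⧸ W) < Nat.card G := by
  have h1 := Subgroup.card_eq_card_quotient_mul_card_subgroup W
  have h2 : 1 < Nat.card W := (Subgroup.one_lt_card_iff_ne_bot W).2 h
  have h3 : 0 < Nat.card (G ⧸ W) := Nat.card_pos
  calc Nat.card (G ⧸ W) < Nat.card (G ⧸ W) * Nat.card W := by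
        exact (Nat.lt_mul_iff_one_lt_right h3).2 h2
    _ = Nat.card G := h1.symm


lemma center_ne_bot (H : Type) [Group H] [Group.IsNilpotent H] [Nontrivial H] :
    Subgroup.center H ≠ ⊥ := by
  intro hbot
  have hall : ∀ n, Subgroup.upperCentralSeries H n = ⊥ := by
    intro n
    induction n with
    | zero => exact Subgroup.upperCentralSeries_zero H
    | succ n ih =>
      rw [eq_bot_iff]
      intro y hy
      rw [Subgroup.mem_bot]
      have h1 := Subgroup.mem_upperCentralSeries_succ_iff.1 hy
      have hyc : y ∈ Subgroup.center H := by
        rw [Subgroup.mem_center_iff]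
        intro g
        have h2 := h1 g
        rw [ih, Subgroup.mem_bot] at h2
        exact ((commutatorElement_eq_one_iff_commute.1 h2).symm).eq
      rw [hbot, Subgroup.mem_bot] at hyc
      exact hyc
  obtain ⟨n, hn⟩ := Group.IsNilpotent.nilpotent (G := H)
  have hone : ∀ x : H, x = 1 := by
    intro x
    have hx : x ∈ Subgroup.upperCentralSeries H n := hn ▸ Subgroup.mem_top x
    rwa [hall n, Subgroup.mem_bot] at hx
  obtain ⟨a, b, hab⟩ := exists_pair_ne H
  exact hab (by rw [hone a, hone b])

lemma closure_singleton_of_normalClosure :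
    ∀ (H : Type) [Group H] [Group.IsNilpotent H], ∀ a : H,
      Subgroup.normalClosure {a} = ⊤ → Subgroup.closure {a} = ⊤ := by
  intro H _ _
  refine nilpotent_center_quotient_ind
    (P := fun K _ _ => ∀ a : K, Subgroup.normalClosure {a} = ⊤ → Subgroup.closure {a} = ⊤)
    H ?_ ?_
  · intro K _ _ a _
    rw [Subgroup.eq_top_iff']
    intro g
    have : g = a := Subsingleton.elim g a
    rw [this]
    exact Subgroup.subset_closure rfl
  · intro K _ _ ih a ha
    set f := QuotientGroup.mk' (Subgroup.center K) with hf
    have hsurj : Function.Surjective f := QuotientGroup.mk'_surjective _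
    have h1 : Subgroup.normalClosure {f a} = ⊤ := by
      have h0 := Subgroup.map_normalClosure {a} f hsurj
      rw [ha, Set.image_singleton] at h0
      rw [← h0]
      exact Subgroup.map_top_of_surjective f hsurj
    have h2 : Subgroup.closure {f a} = ⊤ := ih (f a) h1
    have h3 : Subgroup.closure {a} ⊔ Subgroup.center K = ⊤ := by
      have h4 : Subgroup.map f (Subgroup.closure {a}) = ⊤ := by
        rw [MonoidHom.map_closure, Set.image_singleton, h2]
      have h5 := Subgroup.comap_map_eq f (Subgroup.closure {a})
      rw [h4, hf, QuotientGroup.ker_mk'] at h5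
      rw [← h5]
      exact Subgroup.comap_top _
    have hnormal : (Subgroup.closure {a}).Normal := by
      constructor
      intro h hh g
      have hg : g ∈ ((Subgroup.closure {a} ⊔ Subgroup.center K : Subgroup K) : Set K) := by
        rw [h3]; exact Subgroup.mem_top g
      rw [Subgroup.mul_normal] at hg
      obtain ⟨c, hc, z, hz, rfl⟩ := hg
      have hzc : ∀ w : K, z * w = w * z := fun w => (Subgroup.mem_center_iff.1 hz w).symm
      have heq : c * z * h * (c * z)⁻¹ = c * h * c⁻¹ := by
        have hzh : z * h * z⁻¹ = h := by rw [hzc h]; group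
        calc c * z * h * (c * z)⁻¹ = c * (z * h * z⁻¹) * c⁻¹ := by group
          _ = c * h * c⁻¹ := by rw [hzh]
      rw [heq]
      exact (Subgroup.closure {a}).mul_mem
        ((Subgroup.closure {a}).mul_mem hc hh) ((Subgroup.closure {a}).inv_mem hc)
    rw [eq_top_iff, ← ha]
    exact Subgroup.normalClosure_le_normal Subgroup.subset_closure

def centerM (N : Subgroup G) : Subgroup G := (Subgroup.center ↥N).map N.subtype

lemma mem_centerM {N : Subgroup G} {v : G} :
    v ∈ centerM N ↔ v ∈ N ∧ ∀ w ∈ N, w * v = v * w := by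
  constructor
  · rintro ⟨⟨z, hzN⟩, hzc, rfl⟩
    refine ⟨hzN, fun w hw => ?_⟩
    have h := Subgroup.mem_center_iff.1 hzc ⟨w, hw⟩
    exact congrArg (fun t : ↥N => (t : G)) h
  · rintro ⟨hvN, hvc⟩
    refine ⟨⟨v, hvN⟩, SetLike.mem_coe.mpr (Subgroup.mem_center_iff.mpr ?_), rfl⟩
    rintro ⟨w, hw⟩
    exact Subtype.ext (hvc w hw)

lemma centerM_normal {N : Subgroup G} (hN : N.Normal) : (centerM N).Normal := by
  constructor
  intro z hz g
  rw [mem_centerM] at hz ⊢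
  obtain ⟨hzN, hzc⟩ := hz
  refine ⟨hN.conj_mem z hzN g, fun w hw => ?_⟩
  have hw2 : g⁻¹ * w * g ∈ N := by
    have := hN.conj_mem w hw g⁻¹
    rwa [inv_inv] at this
  have h1 := hzc (g⁻¹ * w * g) hw2
  calc w * (g * z * g⁻¹) = g * ((g⁻¹ * w * g) * z) * g⁻¹ := by group
    _ = g * (z * (g⁻¹ * w * g)) * g⁻¹ := by rw [h1]
    _ = (g * z * g⁻¹) * w := by group

lemma centerM_ne_bot {N : Subgroup G} (h1 : Group.IsNilpotent ↥N) (h2 : N ≠ ⊥) :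
    centerM N ≠ ⊥ := by
  haveI := h1
  haveI : Nontrivial ↥N := (Subgroup.nontrivial_iff_ne_bot N).2 h2
  have h3 := center_ne_bot ↥N
  intro hbot
  apply h3
  rw [eq_bot_iff]
  intro z hz
  rw [Subgroup.mem_bot]
  have hm : (z : G) ∈ centerM N := ⟨z, hz, rfl⟩
  rw [hbot, Subgroup.mem_bot] at hm
  exact Subtype.ext (by simpa using hm)

lemma nilpotent_of_le {A B : Subgroup G} (h : A ≤ B) (hB : Group.IsNilpotent ↥B) :
    Group.IsNilpotent ↥A := by
  haveI := hB
  exact nilpotent_of_mulEquiv (Subgroup.subgroupOfEquivOfLe h)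

lemma exists_minimal_normal [Finite G] [Nontrivial G] :
    ∃ V : Subgroup G, V.Normal ∧ V ≠ ⊥ ∧
      ∀ W : Subgroup G, W.Normal → W ≠ ⊥ → W ≤ V → W = V := by
  classical
  have hfin : ({W : Subgroup G | W.Normal ∧ W ≠ ⊥}).Finite := Set.toFinite _
  have htopb : (⊤ : Subgroup G) ≠ ⊥ := by
    intro h
    obtain ⟨a, b, hab⟩ := exists_pair_ne G
    apply hab
    have ha : a ∈ (⊥ : Subgroup G) := h ▸ Subgroup.mem_top a
    have hb : b ∈ (⊥ : Subgroup G) := h ▸ Subgroup.mem_top b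
    rw [Subgroup.mem_bot] at ha hb
    rw [ha, hb]
  have hne : ({W : Subgroup G | W.Normal ∧ W ≠ ⊥}).Nonempty :=
    ⟨⊤, ⟨inferInstance, htopb⟩⟩
  obtain ⟨V, hV, hmin⟩ :=
    Set.exists_min_image {W : Subgroup G | W.Normal ∧ W ≠ ⊥} (fun W => Nat.card W) hfin hne
  refine ⟨V, hV.1, hV.2, fun W hWn hWb hWV => ?_⟩
  by_contra hne2
  have hlt : W < V := lt_of_le_of_ne hWV hne2
  have h1 := card_lt_of_lt hlt
  have h2 := hmin V ⟨hV.1, hV.2⟩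
  have h3 := hmin W ⟨hWn, hWb⟩
  omega


section SigmaMachinery

variable [Finite G] {K : Set G}

/-- Inside a nilpotent subgroup `Y`, a proper subgroup `E` grows inside its normalizer. -/
lemma normalizer_step {Y E : Subgroup G} (hnil : Group.IsNilpotent ↥Y) (h : E < Y) :
    ∃ E' : Subgroup G, E < E' ∧ E' ≤ Y ∧ ∀ w ∈ E', ∀ e ∈ E, w * e * w⁻¹ ∈ E := by
  haveI := hnil
  have hNC : NormalizerCondition ↥Y := normalizerCondition_of_isNilpotent
  have hHtop : E.subgroupOf Y ≠ ⊤ := by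
    intro htop
    exact h.ne (le_antisymm h.le (Subgroup.subgroupOf_eq_top.1 htop))
  have hlt := hNC (E.subgroupOf Y) (lt_of_le_of_ne le_top hHtop)
  refine ⟨Subgroup.map Y.subtype (Subgroup.normalizer (E.subgroupOf Y : Set ↥Y)), ?_, Subgroup.map_subtype_le _, ?_⟩
  · have hle : E ≤ Subgroup.map Y.subtype (Subgroup.normalizer (E.subgroupOf Y : Set ↥Y)) := by
      have h1 : E = Subgroup.map Y.subtype (E.subgroupOf Y) := by
        rw [Subgroup.subgroupOf_map_subtype, inf_of_le_left h.le]
      nth_rewrite 1 [h1]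
      exact Subgroup.map_mono hlt.le
    rcases lt_or_eq_of_le hle with h2 | h2
    · exact h2
    · exfalso
      obtain ⟨wbar, hw1, hw2⟩ := SetLike.exists_of_lt hlt
      apply hw2
      rw [Subgroup.mem_subgroupOf]
      rw [h2]
      exact ⟨wbar, hw1, rfl⟩
  · rintro w ⟨wbar, hwbar, rfl⟩ e he
    have heY : e ∈ Y := h.le he
    have h1 : (⟨e, heY⟩ : ↥Y) ∈ E.subgroupOf Y := Subgroup.mem_subgroupOf.2 he
    have h2 := (Subgroup.mem_normalizer_iff.1 hwbar ⟨e, heY⟩).1 h1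
    rw [Subgroup.mem_subgroupOf] at h2
    exact h2

/-- Key growth lemma: if `D` is the `K`-core of itself, properly contained in a nilpotent
`K`-generated `Y`, then some element of `K ∩ Y` outside `D` normalizes `D`. -/
lemma Cprime (hKconj : ∀ k ∈ K, ∀ g : G, g * k * g⁻¹ ∈ K) {Y D : Subgroup G}
    (hnil : Group.IsNilpotent ↥Y) (hDY : D ≤ Y) (hne : D ≠ Y)
    (hYgen : Subgroup.closure (K ∩ Y) = Y) (hDcore : Subgroup.closure (K ∩ D) = D) :
    ∃ w, w ∈ K ∧ w ∈ Y ∧ w ∉ D ∧ w ∈ Subgroup.normalizer (D : Set G) := by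
  have hbase : ∀ E : Subgroup G, E ≤ Y → K ∩ ↑E ⊆ ↑D → E ≠ Y := by
    intro E hEY hKE hEeq
    apply hne
    apply le_antisymm hDY
    rw [← hYgen]
    apply (Subgroup.closure_le D).2
    intro u hu
    exact hKE ⟨hu.1, by rw [← hEeq] at hu; exact hu.2⟩
  suffices haux : ∀ (d : ℕ) (E : Subgroup G), D ≤ E → E ≤ Y → K ∩ ↑E ⊆ ↑D →
      Nat.card Y ≤ Nat.card E + d → ∃ w, w ∈ K ∧ w ∈ Y ∧ w ∉ D ∧ w ∈ Subgroup.normalizer (D : Set G) by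
    refine haux (Nat.card Y) D le_rfl hDY ?_ ?_
    · exact fun u hu => hu.2
    · omega
  intro d
  induction d with
  | zero =>
    intro E hDE hEY hKE hcard
    exfalso
    exact hbase E hEY hKE (Subgroup.eq_of_le_of_card_ge hEY (by omega))
  | succ d ih =>
    intro E hDE hEY hKE hcard
    have hEneY : E ≠ Y := hbase E hEY hKE
    have hlt : E < Y := lt_of_le_of_ne hEY hEneY
    obtain ⟨E', hEE', hE'Y, hE'norm⟩ := normalizer_step hnil hlt
    by_cases hKE' : K ∩ ↑E' ⊆ ↑D
    · refine ih E' (le_trans hDE hEE'.le) hE'Y hKE' ?_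
      have := card_lt_of_lt hEE'
      omega
    · rw [Set.not_subset] at hKE'
      obtain ⟨w, hwKE', hwD⟩ := hKE'
      have hDeq : Subgroup.closure (K ∩ ↑E) = D := by
        apply le_antisymm
        · exact (Subgroup.closure_le D).2 hKE
        · rw [← hDcore]
          apply Subgroup.closure_mono
          exact Set.inter_subset_inter_right _ (fun u hu => hDE hu)
      have hwnorm : w ∈ Subgroup.normalizer (D : Set G) := by
        apply mem_normalizer_of_conj_mem
        intro dd hdd
        rw [← hDeq] at hdd ⊢
        induction hdd using Subgroup.closure_induction with
        | mem u hu =>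
          apply Subgroup.subset_closure
          exact ⟨hKconj u hu.1 w, hE'norm w hwKE'.2 u hu.2⟩
        | one => simpa using Subgroup.one_mem _
        | mul a b _ _ ha hb =>
          have h : w * (a * b) * w⁻¹ = (w * a * w⁻¹) * (w * b * w⁻¹) := by group
          rw [h]
          exact Subgroup.mul_mem _ ha hb
        | inv a _ ha =>
          have h : w * a⁻¹ * w⁻¹ = (w * a * w⁻¹)⁻¹ := by group
          rw [h]
          exact Subgroup.inv_mem _ ha
      exact ⟨w, hwKE'.1, hE'Y hwKE'.2, hwD, hwnorm⟩

def Sig (K : Set G) (Y : Subgroup G) : Prop :=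
  Y ≠ ⊥ ∧ Group.IsNilpotent ↥Y ∧ Subgroup.closure (K ∩ Y) = Y

def MaxSig (K : Set G) (Y : Subgroup G) : Prop :=
  Sig K Y ∧ ∀ Y', Sig K Y' → Y ≤ Y' → Y' = Y

lemma sig_closure {T : Set G} (hT : T ⊆ K) (hne : ∃ t ∈ T, t ≠ (1 : G))
    (hnil : Group.IsNilpotent ↥(Subgroup.closure T)) : Sig K (Subgroup.closure T) := by
  refine ⟨?_, hnil, ?_⟩
  · obtain ⟨t, ht, htne⟩ := hne
    intro hbot
    apply htne
    have h1 : t ∈ Subgroup.closure T := Subgroup.subset_closure ht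
    rw [hbot, Subgroup.mem_bot] at h1
    exact h1
  · apply le_antisymm
    · exact (Subgroup.closure_le _).2 Set.inter_subset_right
    · apply Subgroup.closure_mono
      intro t ht
      exact ⟨hT ht, Subgroup.subset_closure ht⟩

lemma exists_maxSig {J : Subgroup G} (hJ : Sig K J) : ∃ Y, MaxSig K Y ∧ J ≤ Y := by
  classical
  have hfin : ({Y : Subgroup G | Sig K Y ∧ J ≤ Y}).Finite := Set.toFinite _
  obtain ⟨Y, hY, hmax⟩ := Set.exists_max_image {Y : Subgroup G | Sig K Y ∧ J ≤ Y}
    (fun W => Nat.card W) hfin ⟨J, hJ, le_rfl⟩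
  refine ⟨Y, ⟨hY.1, ?_⟩, hY.2⟩
  intro Y' hY' hle
  have h2 := hmax Y' ⟨hY', le_trans hY.2 hle⟩
  exact (Subgroup.eq_of_le_of_card_ge hle h2).symm

def conjSub (g : G) (Y : Subgroup G) : Subgroup G :=
  Subgroup.map (MulAut.conj g).toMonoidHom Y

lemma mem_conjSub {g v : G} {Y : Subgroup G} : v ∈ conjSub g Y ↔ ∃ y ∈ Y, g * y * g⁻¹ = v := by
  constructor
  · rintro ⟨y, hy, rfl⟩
    exact ⟨y, hy, by simp [MulAut.conj_apply]⟩
  · rintro ⟨y, hy, rfl⟩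
    exact ⟨y, hy, by simp [MulAut.conj_apply]⟩

lemma conjSub_conjSub (g : G) (Y : Subgroup G) : conjSub g⁻¹ (conjSub g Y) = Y := by
  ext v
  rw [mem_conjSub]
  constructor
  · rintro ⟨u, hu, rfl⟩
    rw [mem_conjSub] at hu
    obtain ⟨y, hy, rfl⟩ := hu
    have h : g⁻¹ * (g * y * g⁻¹) * g⁻¹⁻¹ = y := by group
    rw [h]
    exact hy
  · intro hv
    exact ⟨g * v * g⁻¹, mem_conjSub.mpr ⟨v, hv, rfl⟩, by group⟩

lemma sig_conj (hKconj : ∀ k ∈ K, ∀ g : G, g * k * g⁻¹ ∈ K) (g : G) {Y : Subgroup G}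
    (h : Sig K Y) : Sig K (conjSub g Y) := by
  obtain ⟨hbot, hnil, hcore⟩ := h
  refine ⟨?_, ?_, ?_⟩
  · intro hb
    apply hbot
    rw [eq_bot_iff]
    intro y hy
    have h1 : g * y * g⁻¹ ∈ conjSub g Y := mem_conjSub.mpr ⟨y, hy, rfl⟩
    rw [hb, Subgroup.mem_bot] at h1
    rw [Subgroup.mem_bot]
    have h2 : y = g⁻¹ * (g * y * g⁻¹) * g := by group
    rw [h2, h1]
    group
  · haveI := hnil
    exact nilpotent_of_mulEquiv
      (Subgroup.equivMapOfInjective Y (MulAut.conj g).toMonoidHom (MulAut.conj g).injective)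
  · have himg : (MulAut.conj g).toMonoidHom '' (K ∩ ↑Y) = K ∩ ↑(conjSub g Y) := by
      ext u
      constructor
      · rintro ⟨y, ⟨hyK, hyY⟩, rfl⟩
        refine ⟨by simpa [MulAut.conj_apply] using hKconj y hyK g, ?_⟩
        rw [SetLike.mem_coe]
        exact ⟨y, hyY, rfl⟩
      · rintro ⟨huK, huY⟩
        rw [SetLike.mem_coe, mem_conjSub] at huY
        obtain ⟨y, hy, rfl⟩ := huY
        refine ⟨y, ⟨?_, hy⟩, by simp [MulAut.conj_apply]⟩
        have h3 := hKconj _ huK g⁻¹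
        have h4 : g⁻¹ * (g * y * g⁻¹) * g⁻¹⁻¹ = y := by group
        rwa [h4] at h3
    show Subgroup.closure (K ∩ ↑(conjSub g Y)) = conjSub g Y
    rw [← himg, ← MonoidHom.map_closure, hcore]
    rfl

lemma conj_maxSig (hKconj : ∀ k ∈ K, ∀ g : G, g * k * g⁻¹ ∈ K) (g : G) {Y : Subgroup G}
    (h : MaxSig K Y) : MaxSig K (conjSub g Y) := by
  refine ⟨sig_conj hKconj g h.1, ?_⟩
  intro Y' hY' hle
  have h1 : Y ≤ conjSub g⁻¹ Y' := by
    have h0 := conjSub_conjSub g Y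
    rw [← h0]
    exact Subgroup.map_mono hle
  have h2 := h.2 _ (sig_conj hKconj g⁻¹ hY') h1
  have h3 := conjSub_conjSub g⁻¹ Y'
  rw [inv_inv] at h3
  rw [← h3, h2]

lemma sig_unique (hKconj : ∀ k ∈ K, ∀ g : G, g * k * g⁻¹ ∈ K) (hK1 : (1 : G) ∉ K)
    (hP1 : ∀ T : Set G, T ⊆ K → Subgroup.closure T ≠ ⊤ →
      Group.IsNilpotent ↥(Subgroup.closure T))
    (hP3 : ∀ D : Subgroup G, Sig K D → Subgroup.normalizer (D : Set G) ≠ ⊤) :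
    ∀ Y₁ Y₂ : Subgroup G, MaxSig K Y₁ → MaxSig K Y₂ →
      (∃ z ∈ K, z ∈ Y₁ ∧ z ∈ Y₂) → Y₁ = Y₂ := by
  classical
  by_contra hcon
  push_neg at hcon
  obtain ⟨A, B, hA, hB, hshared, hAB⟩ := hcon
  set P : Set (Subgroup G × Subgroup G) :=
    {p | MaxSig K p.1 ∧ MaxSig K p.2 ∧ (∃ z ∈ K, z ∈ p.1 ∧ z ∈ p.2) ∧ p.1 ≠ p.2} with hPdef
  have hPne : P.Nonempty := ⟨(A, B), hA, hB, hshared, hAB⟩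
  obtain ⟨⟨Y₁, Y₂⟩, hP, hmax⟩ := Set.exists_max_image P
    (fun p => Nat.card (Subgroup.closure (K ∩ ↑(p.1 ⊓ p.2)))) (Set.toFinite _) hPne
  obtain ⟨hM1, hM2, ⟨z, hzK, hzY₁, hzY₂⟩, hne⟩ := hP
  set D := Subgroup.closure (K ∩ ↑(Y₁ ⊓ Y₂)) with hD
  have hDle : D ≤ Y₁ ⊓ Y₂ := (Subgroup.closure_le _).2 Set.inter_subset_right
  have hDle₁ : D ≤ Y₁ := le_trans hDle inf_le_left
  have hDle₂ : D ≤ Y₂ := le_trans hDle inf_le_right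
  have hzD : z ∈ D := Subgroup.subset_closure
    ⟨hzK, SetLike.mem_coe.mpr (Subgroup.mem_inf.mpr ⟨hzY₁, hzY₂⟩)⟩
  have hDbot : D ≠ ⊥ := by
    intro h
    rw [h, Subgroup.mem_bot] at hzD
    exact hK1 (hzD ▸ hzK)
  have hDnil : Group.IsNilpotent ↥D := nilpotent_of_le hDle₁ hM1.1.2.1
  have hDcore : Subgroup.closure (K ∩ ↑D) = D := by
    apply le_antisymm
    · exact (Subgroup.closure_le D).2 Set.inter_subset_right
    · nth_rewrite 1 [hD]
      apply Subgroup.closure_mono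
      intro u hu
      exact ⟨hu.1, Subgroup.subset_closure hu⟩
  have hDSig : Sig K D := ⟨hDbot, hDnil, hDcore⟩
  have hDneY : ∀ Yi : Subgroup G, MaxSig K Yi → D ≤ Yi → D ≠ Yi → True := fun _ _ _ _ => trivial
  have hDne₁ : D ≠ Y₁ := by
    intro h
    apply hne
    have h1 : Y₁ ≤ Y₂ := h ▸ hDle₂
    exact (hM1.2 Y₂ hM2.1 h1).symm
  have hDne₂ : D ≠ Y₂ := by
    intro h
    apply hne
    have h1 : Y₂ ≤ Y₁ := h ▸ hDle₁
    exact hM2.2 Y₁ hM1.1 h1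
  obtain ⟨w₁, hw₁K, hw₁Y, hw₁D, hw₁N⟩ :=
    Cprime hKconj hM1.1.2.1 hDle₁ hDne₁ hM1.1.2.2 hDcore
  obtain ⟨w₂, hw₂K, hw₂Y, hw₂D, hw₂N⟩ :=
    Cprime hKconj hM2.1.2.1 hDle₂ hDne₂ hM2.1.2.2 hDcore
  set T : Set G := (K ∩ ↑D) ∪ {w₁, w₂} with hT
  have hTK : T ⊆ K := by
    rintro u (hu | hu | hu)
    · exact hu.1
    · exact hu ▸ hw₁K
    · rw [Set.mem_singleton_iff] at hu
      exact hu ▸ hw₂K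
  have hTnorm : T ⊆ ↑(Subgroup.normalizer (D : Set G)) := by
    rintro u (hu | hu | hu)
    · exact Subgroup.le_normalizer hu.2
    · exact hu ▸ hw₁N
    · rw [Set.mem_singleton_iff] at hu
      exact hu ▸ hw₂N
  have hJle : Subgroup.closure T ≤ Subgroup.normalizer (D : Set G) := (Subgroup.closure_le _).2 hTnorm
  have hJtop : Subgroup.closure T ≠ ⊤ := by
    intro h
    exact hP3 D hDSig (eq_top_iff.2 (h ▸ hJle))
  have hJnil := hP1 T hTK hJtop
  have hw₁ne1 : w₁ ≠ 1 := fun h => hK1 (h ▸ hw₁K)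
  have hJSig : Sig K (Subgroup.closure T) :=
    sig_closure hTK ⟨w₁, Or.inr (Or.inl rfl), hw₁ne1⟩ hJnil
  obtain ⟨Y₃, hY₃max, hJY₃⟩ := exists_maxSig hJSig
  have hDY₃ : D ≤ Y₃ := by
    rw [← hDcore]
    refine le_trans ?_ hJY₃
    apply Subgroup.closure_mono
    exact Set.subset_union_left
  have hw₁Y₃ : w₁ ∈ Y₃ := hJY₃ (Subgroup.subset_closure (Or.inr (Or.inl rfl)))
  have hw₂Y₃ : w₂ ∈ Y₃ := hJY₃ (Subgroup.subset_closure (Or.inr (Or.inr rfl)))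
  have hclaim : ∀ (Yi : Subgroup G) (wi : G), MaxSig K Yi → D ≤ Yi → wi ∈ K → wi ∈ Yi →
      wi ∈ Y₃ → wi ∉ D → Y₃ = Yi := by
    intro Yi wi hMi hDYi hwiK hwiYi hwiY₃ hwiD
    by_contra hneq
    have hPmem : (Y₃, Yi) ∈ P := ⟨hY₃max, hMi, ⟨wi, hwiK, hwiY₃, hwiYi⟩, hneq⟩
    have hle2 := hmax _ hPmem
    have hDlt : D < Subgroup.closure (K ∩ ↑(Y₃ ⊓ Yi)) := by
      apply lt_of_le_of_ne
      · rw [← hDcore]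
        apply Subgroup.closure_mono
        intro u hu
        refine ⟨hu.1, SetLike.mem_coe.mpr (Subgroup.mem_inf.mpr ⟨hDY₃ hu.2, hDYi hu.2⟩)⟩
      · intro h
        apply hwiD
        rw [h]
        exact Subgroup.subset_closure
          ⟨hwiK, SetLike.mem_coe.mpr (Subgroup.mem_inf.mpr ⟨hwiY₃, hwiYi⟩)⟩
    have hcard := card_lt_of_lt hDlt
    simp only [hPdef] at hle2
    omega
  have h31 := hclaim Y₁ w₁ hM1 hDle₁ hw₁K hw₁Y hw₁Y₃ hw₁D
  have h32 := hclaim Y₂ w₂ hM2 hDle₂ hw₂K hw₂Y hw₂Y₃ hw₂D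
  exact hne (h31 ▸ h32)

lemma no_engel (hKconj : ∀ k ∈ K, ∀ g : G, g * k * g⁻¹ ∈ K) (hK1 : (1 : G) ∉ K)
    (hP1 : ∀ T : Set G, T ⊆ K → Subgroup.closure T ≠ ⊤ →
      Group.IsNilpotent ↥(Subgroup.closure T))
    (hP3 : ∀ D : Subgroup G, Sig K D → Subgroup.normalizer (D : Set G) ≠ ⊤)
    {x : G} (hxK : x ∈ K) {n : ℕ} (hx : ∀ g : G, engel g x n = 1) : False := by
  have hx1 : x ≠ 1 := fun h => hK1 (h ▸ hxK)
  have hSx : Sig K (Subgroup.closure {x}) := by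
    apply sig_closure (Set.singleton_subset_iff.2 hxK) ⟨x, rfl, hx1⟩
    rw [← Subgroup.zpowers_eq_closure]
    refine ⟨1, ?_⟩
    rw [Subgroup.upperCentralSeries_one]
    rw [eq_top_iff]
    rintro ⟨g, hg⟩ -
    rw [Subgroup.mem_center_iff]
    rintro ⟨h, hh⟩
    obtain ⟨i, hi⟩ := Subgroup.mem_zpowers_iff.1 hg
    obtain ⟨j, hj⟩ := Subgroup.mem_zpowers_iff.1 hh
    apply Subtype.ext
    show h * g = g * h
    rw [← hi, ← hj, ← zpow_add, ← zpow_add, add_comm]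
  obtain ⟨Y, hYmax, hxY0⟩ := exists_maxSig hSx
  have hxY : x ∈ Y := hxY0 (Subgroup.subset_closure rfl)
  set M := Subgroup.normalizer (Y : Set G) with hM
  have hMne : M ≠ ⊤ := hP3 Y hYmax.1
  have hxM : x ∈ M := Subgroup.le_normalizer hxY
  have trap : ∀ h : G, h * x * h⁻¹ ∈ M → h ∈ M := by
    intro h hh
    set z := h * x * h⁻¹ with hz
    have hzK : z ∈ K := hKconj x hxK h
    have hz1 : z ≠ 1 := fun he => hK1 (he ▸ hzK)
    have hzY : z ∈ Y := by
      set T : Set G := (K ∩ ↑Y) ∪ {z} with hT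
      have hTK : T ⊆ K := by
        rintro u (hu | hu)
        · exact hu.1
        · rw [Set.mem_singleton_iff] at hu
          exact hu ▸ hzK
      have hTM : T ⊆ ↑M := by
        rintro u (hu | hu)
        · exact Subgroup.le_normalizer hu.2
        · rw [Set.mem_singleton_iff] at hu
          exact hu ▸ hh
      have hWle : Subgroup.closure T ≤ M := (Subgroup.closure_le _).2 hTM
      have hWtop : Subgroup.closure T ≠ ⊤ := fun he => hMne (eq_top_iff.2 (he ▸ hWle))
      have hWnil := hP1 T hTK hWtop
      have hWSig : Sig K (Subgroup.closure T) := sig_closure hTK ⟨z, Or.inr rfl, hz1⟩ hWnil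
      have hYW : Y ≤ Subgroup.closure T := by
        conv_lhs => rw [← hYmax.1.2.2]
        apply Subgroup.closure_mono
        exact Set.subset_union_left
      have hWY := hYmax.2 _ hWSig hYW
      rw [← hWY]
      exact Subgroup.subset_closure (Or.inr rfl)
    have hY' : MaxSig K (conjSub h Y) := conj_maxSig hKconj h hYmax
    have hzY' : z ∈ conjSub h Y := mem_conjSub.mpr ⟨x, hxY, rfl⟩
    have heq := sig_unique hKconj hK1 hP1 hP3 Y (conjSub h Y) hYmax hY' ⟨z, hzK, hzY, hzY'⟩
    rw [hM, Subgroup.mem_normalizer_iff]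
    intro u
    constructor
    · intro hu
      have h1 : h * u * h⁻¹ ∈ conjSub h Y := mem_conjSub.mpr ⟨u, hu, rfl⟩
      rwa [← heq] at h1
    · intro hu
      have h1 : h * u * h⁻¹ ∈ conjSub h Y := heq ▸ hu
      rw [mem_conjSub] at h1
      obtain ⟨v, hv, hveq⟩ := h1
      have h2 : v = u := mul_left_cancel (mul_right_cancel hveq)
      exact h2 ▸ hv
  exact hMne (trap_lemma hx hxM trap)

end SigmaMachinery

end EngelProof




namespace EngelProof

variable {G : Type} [Group G]

lemma engel_persist {g x : G} {n : ℕ} (h : engel g x n = 1) (k : ℕ) : engel g x (n + k) = 1 := by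
  induction k with
  | zero => exact h
  | succ k ih =>
    rw [show n + (k + 1) = (n + k) + 1 by omega, engel, ih, commutatorElement_def]
    group

theorem main_aux : ∀ (N : ℕ) (G : Type) [Group G] [Finite G], Nat.card G ≤ N →
    ∀ (S : Set G), Subgroup.closure S = ⊤ →
    (∀ x ∈ S, ∃ n : ℕ, ∀ g : G, engel g x n = 1) → Group.IsNilpotent G := by
  intro N
  induction N with
  | zero =>
    intro G _ _ hcard S hgen hEngel
    exfalso
    have : 0 < Nat.card G := Nat.card_pos
    omega
  | succ N ih =>
    intro G _ _ hcard S hgen hEngel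
    have IH : ∀ (H : Type) [Group H] [Finite H], Nat.card H < Nat.card G →
        ∀ (SH : Set H), Subgroup.closure SH = ⊤ →
        (∀ x ∈ SH, ∃ n : ℕ, ∀ g : H, engel g x n = 1) → Group.IsNilpotent H := by
      intro H _ _ hlt SH h1 h2
      exact ih H (by omega) SH h1 h2
    by_cases hss : Subsingleton G
    · exact Group.isNilpotent_of_subsingleton
    haveI hnontriv : Nontrivial G := not_subsingleton_iff_nontrivial.1 hss
    by_contra hG
    -- proper subgroups generated by Engel elements are nilpotent
    have hSub : ∀ T : Set G, (∀ t ∈ T, ∃ n : ℕ, ∀ g : G, engel g t n = 1) →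
        Subgroup.closure T ≠ ⊤ → Group.IsNilpotent ↥(Subgroup.closure T) := by
      intro T hTn hne
      apply IH ↥(Subgroup.closure T) (card_lt_of_ne_top hne)
        ((Subgroup.closure T).subtype ⁻¹' T) (Subgroup.closure_preimage_eq_top T)
      rintro ⟨t, htH⟩ ht
      obtain ⟨n, hn⟩ := hTn t ht
      exact ⟨n, engel_subgroup hn⟩
    -- nontrivial normal quotients are nilpotent
    have hQuot : ∀ (W : Subgroup G) [W.Normal], W ≠ ⊥ → Group.IsNilpotent (G ⧸ W) := by
      intro W hW hWb
      apply IH (G ⧸ W) (card_quotient_lt hWb) ((QuotientGroup.mk' W) '' S)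
      · rw [← MonoidHom.map_closure, hgen]
        exact Subgroup.map_top_of_surjective _ (QuotientGroup.mk'_surjective W)
      · rintro y ⟨x, hxS, rfl⟩
        obtain ⟨n, hn⟩ := hEngel x hxS
        exact ⟨n, engel_surj _ (QuotientGroup.mk'_surjective W) hn⟩
    -- the center is trivial
    have hZ : Subgroup.center G = ⊥ := by
      by_contra hZb
      exact hG (of_quotient_center_nilpotent (hQuot (Subgroup.center G) hZb))
    -- a minimal nontrivial normal subgroup
    obtain ⟨V, hVnorm, hVbot, hVmin⟩ := exists_minimal_normal (G := G)
    -- every nontrivial normal subgroup contains V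
    have hV7 : ∀ W : Subgroup G, W.Normal → W ≠ ⊥ → V ≤ W := by
      intro W hWn hWb
      haveI := hWn
      haveI := hVnorm
      by_cases hWVb : W ⊓ V = ⊥
      · exfalso
        apply hG
        set f := (QuotientGroup.mk' W).prod (QuotientGroup.mk' V) with hf
        have hker : f.ker = ⊥ := by
          rw [hf, MonoidHom.ker_prod, QuotientGroup.ker_mk', QuotientGroup.ker_mk']
          exact hWVb
        have hinj : Function.Injective f := (MonoidHom.ker_eq_bot_iff f).1 hker
        haveI h1 := hQuot W hWb
        haveI h2 := hQuot V hVbot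
        haveI : Group.IsNilpotent ↥f.range := Subgroup.isNilpotent _
        exact nilpotent_of_mulEquiv (MonoidHom.ofInjective hinj).symm
      · have heq := hVmin (W ⊓ V) inferInstance hWVb inf_le_right
        rw [← heq]
        exact inf_le_left
    -- S contains a nontrivial element
    have hSne : ∃ x ∈ S, x ≠ (1 : G) := by
      by_contra hcon
      push_neg at hcon
      apply hss
      constructor
      intro a b
      have hone : ∀ g : G, g = 1 := by
        intro g
        have hg : g ∈ Subgroup.closure S := by rw [hgen]; exact Subgroup.mem_top g
        induction hg using Subgroup.closure_induction with
        | mem u hu => exact hcon u hu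
        | one => rfl
        | mul a b _ _ ha hb => rw [ha, hb]; group
        | inv a _ ha => rw [ha]; group
      rw [hone a, hone b]
    -- CASE SPLIT on whether V is abelian
    by_cases hVab : ∀ a ∈ V, ∀ b ∈ V, a * b = b * a
    · -- V abelian
      by_cases hVtop : V = ⊤
      · -- G is abelian, hence nilpotent: contradiction
        apply hG
        refine ⟨1, ?_⟩
        rw [Subgroup.upperCentralSeries_one, eq_top_iff]
        intro g _
        exact Subgroup.mem_center_iff.2 fun h =>
          hVab h (hVtop ▸ Subgroup.mem_top h) g (hVtop ▸ Subgroup.mem_top g)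
      · -- V a proper abelian minimal normal subgroup: show V is central, contradiction
        have hcomm : ∀ x ∈ S, ∀ v ∈ V, x * v = v * x := by
          intro x hxS v hv
          by_cases hx1 : x = 1
          · rw [hx1]; group
          by_cases hxcl : Subgroup.normalClosure {x} = ⊤
          · -- G = V ⊔ ⟨x⟩
            obtain ⟨n, hn⟩ := hEngel x hxS
            haveI := hVnorm
            haveI := hQuot V hVbot
            have hncl : Subgroup.normalClosure {(QuotientGroup.mk' V) x} = ⊤ := by
              have h0 := Subgroup.map_normalClosure {x} (QuotientGroup.mk' V)
                (QuotientGroup.mk'_surjective V)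
              rw [hxcl, Set.image_singleton] at h0
              rw [← h0]
              exact Subgroup.map_top_of_surjective _ (QuotientGroup.mk'_surjective V)
            have hccl := closure_singleton_of_normalClosure _ _ hncl
            have hsup : Subgroup.closure {x} ⊔ V = ⊤ := by
              have h4 : Subgroup.map (QuotientGroup.mk' V) (Subgroup.closure {x}) = ⊤ := by
                rw [MonoidHom.map_closure, Set.image_singleton, hccl]
              have h5 := Subgroup.comap_map_eq (QuotientGroup.mk' V) (Subgroup.closure {x})
              rw [h4, QuotientGroup.ker_mk'] at h5
              rw [← h5]
              exact Subgroup.comap_top _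
            have hgentop : Subgroup.closure ({x} ∪ (V : Set G)) = ⊤ := by
              rw [Subgroup.closure_union, Subgroup.closure_eq, hsup]
            -- any element of V commuting with x is central
            have hcent : ∀ w ∈ V, w * x = x * w → w ∈ Subgroup.center G := by
              intro w hw hwx
              rw [Subgroup.mem_center_iff]
              intro g
              have hg : g ∈ Subgroup.closure ({x} ∪ (V : Set G)) := by
                rw [hgentop]; exact Subgroup.mem_top g
              induction hg using Subgroup.closure_induction with
              | mem u hu =>
                rcases hu with hu | hu
                · rw [Set.mem_singleton_iff] at hu
                  rw [hu]
                  exact hwx.symm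
                · exact hVab u hu w hw
              | one => group
              | mul a b _ _ ha hb => exact Commute.mul_left ha hb
              | inv a _ ha => exact Commute.inv_left ha
            by_cases hcx : ∀ u ∈ V, u * x = x * u
            · exact (hcx v hv).symm
            · exfalso
              push_neg at hcx
              obtain ⟨v₀, hv₀V, hv₀x⟩ := hcx
              have h1 : engel v₀ x 1 ≠ 1 := by
                show ⁅engel v₀ x 0, x⁆ ≠ 1
                rw [Ne, commutatorElement_eq_one_iff_commute]
                exact hv₀x
              have h2 : engel v₀ x (1 + n) = 1 := by
                rw [add_comm]
                exact engel_persist (hn v₀) 1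
              obtain ⟨k, hk1, hk2⟩ := exists_last_engel n 1 h2 h1
              have hwV : engel v₀ x k ∈ V := engel_mem_of_normal hVnorm hv₀V x k
              have hwx : engel v₀ x k * x = x * engel v₀ x k := by
                have : (⁅engel v₀ x k, x⁆ : G) = 1 := hk2
                exact commutatorElement_eq_one_iff_commute.1 this
              have hcentw := hcent _ hwV hwx
              rw [hZ, Subgroup.mem_bot] at hcentw
              exact hk1 hcentw
          · -- the normal closure of x is proper
            set Nx := Subgroup.normalClosure {x} with hNx
            have hNxb : Nx ≠ ⊥ := by
              intro h
              apply hx1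
              have hmem : x ∈ Nx := Subgroup.subset_normalClosure rfl
              rwa [h, Subgroup.mem_bot] at hmem
            have hNxn : Nx.Normal := Subgroup.normalClosure_normal
            have hnil : Group.IsNilpotent ↥Nx := by
              obtain ⟨n, hn⟩ := hEngel x hxS
              apply hSub (Group.conjugatesOfSet {x})
              · intro t ht
                rw [Group.mem_conjugatesOfSet_iff] at ht
                obtain ⟨a, ha, hconj⟩ := ht
                rw [Set.mem_singleton_iff] at ha
                subst ha
                obtain ⟨c, hc⟩ := isConj_iff.1 hconj
                exact ⟨n, hc ▸ engel_conj hn c⟩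
              · exact hxcl
            have hZx := centerM_ne_bot hnil hNxb
            have hZxn := centerM_normal hNxn
            have hVZx : V ≤ centerM Nx := hV7 _ hZxn hZx
            have hvm := mem_centerM.1 (hVZx hv)
            exact hvm.2 x (Subgroup.subset_normalClosure rfl)
        -- V is central: contradiction
        have hVcent : V ≤ Subgroup.center G := by
          intro v hv
          rw [Subgroup.mem_center_iff]
          intro g
          have hg : g ∈ Subgroup.closure S := by rw [hgen]; exact Subgroup.mem_top g
          induction hg using Subgroup.closure_induction with
          | mem u hu => exact hcomm u hu v hv
          | one => group
          | mul a b _ _ ha hb => exact Commute.mul_left ha hb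
          | inv a _ ha => exact Commute.inv_left ha
        apply hVbot
        rw [hZ] at hVcent
        exact le_bot_iff.1 hVcent
    · -- V nonabelian: run the Σ-machinery with any nontrivial Engel generator
      obtain ⟨x, hxS, hx1⟩ := hSne
      obtain ⟨n, hn⟩ := hEngel x hxS
      set K : Set G := {z | ∃ c : G, c * x * c⁻¹ = z} with hK
      have hKconj : ∀ k ∈ K, ∀ g : G, g * k * g⁻¹ ∈ K := by
        rintro k ⟨c, rfl⟩ g
        exact ⟨g * c, by group⟩
      have hK1 : (1 : G) ∉ K := by
        rintro ⟨c, hc⟩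
        apply hx1
        have : x = c⁻¹ * (c * x * c⁻¹) * c := by group
        rw [this, hc]
        group
      have hKengel : ∀ k ∈ K, ∀ g : G, engel g k n = 1 := by
        rintro k ⟨c, rfl⟩
        exact engel_conj hn c
      have hxK : x ∈ K := ⟨1, by group⟩
      have hP1 : ∀ T : Set G, T ⊆ K → Subgroup.closure T ≠ ⊤ →
          Group.IsNilpotent ↥(Subgroup.closure T) := by
        intro T hTK hne
        exact hSub T (fun t ht => ⟨n, hKengel t (hTK ht)⟩) hne
      have hP3 : ∀ D : Subgroup G, Sig K D → Subgroup.normalizer (D : Set G) ≠ ⊤ := by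
        intro D hD htop
        have hDnormal : D.Normal := Subgroup.normalizer_eq_top_iff.1 htop
        have hVD : V ≤ D := hV7 D hDnormal hD.1
        have hVnil : Group.IsNilpotent ↥V := nilpotent_of_le hVD hD.2.1
        have hZV := centerM_ne_bot hVnil hVbot
        have hZVnorm := centerM_normal hVnorm
        have hVZV : V ≤ centerM V := hV7 _ hZVnorm hZV
        push_neg at hVab
        obtain ⟨a, ha, b, hb, hab⟩ := hVab
        apply hab
        exact ((mem_centerM.1 (hVZV ha)).2 b hb).symm
      exact no_engel hKconj hK1 hP1 hP3 hxK hn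

end EngelProof

/-- Baer: a finite group generated by a set of left Engel elements is
nilpotent. -/
theorem finite_group_generated_by_engel_elements_isNilpotent
    (G : Type) [Group G] [Finite G] (S : Set G)
    (hgen : Subgroup.closure S = ⊤)
    (hEngel : ∀ x ∈ S, ∃ n : ℕ, ∀ g : G, engel g x n = 1) :
    Group.IsNilpotent G := by
  exact EngelProof.main_aux (Nat.card G) G le_rfl S hgen hEngel
end

section
/- Let P be a powerful finite p-group generated by d elements. Then P is a product of at most d cyclic subgroups; in particular, if P has exponent dividing e then |P| ≤ e^d. -/
def powOf {P : Type} [Group P] (H : Subgroup P) (n : ℕ) : Subgroup P :=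
  Subgroup.closure ((fun x => x ^ n) '' (H : Set P))

def IsPowerful (P : Type) [Group P] (p : ℕ) : Prop :=
  if p = 2 then ⁅(⊤ : Subgroup P), (⊤ : Subgroup P)⁆ ≤ powOf ⊤ 4
  else ⁅(⊤ : Subgroup P), (⊤ : Subgroup P)⁆ ≤ powOf ⊤ p

open scoped commutatorElement

section PowOfBasic

variable {G : Type} [Group G]

theorem pow_mem_powOf {H : Subgroup G} {x : G} (hx : x ∈ H) (n : ℕ) : x ^ n ∈ powOf H n :=
  Subgroup.subset_closure ⟨x, hx, rfl⟩

theorem powOf_le {H : Subgroup G} {n : ℕ} {K : Subgroup G} (h : ∀ x ∈ H, x ^ n ∈ K) :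
    powOf H n ≤ K := by
  apply (Subgroup.closure_le _).mpr
  rintro y ⟨x, hx, rfl⟩
  exact h x hx

theorem powOf_le_self (H : Subgroup G) (n : ℕ) : powOf H n ≤ H :=
  powOf_le fun x hx => H.pow_mem hx n

theorem powOf_mono {H K : Subgroup G} (h : H ≤ K) (n : ℕ) : powOf H n ≤ powOf K n :=
  powOf_le fun x hx => pow_mem_powOf (h hx) n

theorem powOf_mul_le (H : Subgroup G) (m n : ℕ) :
    powOf H (m * n) ≤ powOf (powOf H m) n :=
  powOf_le fun x hx => by
    rw [pow_mul]
    exact pow_mem_powOf (pow_mem_powOf hx m) n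

theorem map_powOf {G' : Type} [Group G'] (f : G →* G') (H : Subgroup G) (n : ℕ) :
    (powOf H n).map f = powOf (H.map f) n := by
  unfold powOf
  rw [MonoidHom.map_closure]
  congr 1
  ext y
  constructor
  · rintro ⟨-, ⟨x, hx, rfl⟩, rfl⟩
    exact ⟨f x, ⟨x, hx, rfl⟩, (map_pow f x n).symm⟩
  · rintro ⟨-, ⟨x, hx, rfl⟩, rfl⟩
    exact ⟨x ^ n, ⟨x, hx, rfl⟩, map_pow f x n⟩

theorem map_conj_eq_of_normal {H : Subgroup G} (hH : H.Normal) (g : G) :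
    Subgroup.map (MulAut.conj g).toMonoidHom H = H := by
  ext y
  simp only [Subgroup.mem_map, MulAut.conj_apply, MulEquiv.coe_toMonoidHom]
  constructor
  · rintro ⟨x, hx, rfl⟩
    exact hH.conj_mem x hx g
  · intro hy
    refine ⟨g⁻¹ * y * g, ?_, by group⟩
    have := hH.conj_mem y hy g⁻¹
    simpa using this

theorem powOf_normal {H : Subgroup G} (hH : H.Normal) (n : ℕ) : (powOf H n).Normal := by
  constructor
  intro h hh g
  have hmap : Subgroup.map (MulAut.conj g).toMonoidHom (powOf H n) = powOf H n := by
    rw [map_powOf, map_conj_eq_of_normal hH]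
  have : (MulAut.conj g).toMonoidHom h ∈ Subgroup.map (MulAut.conj g).toMonoidHom (powOf H n) :=
    Subgroup.mem_map_of_mem _ hh
  rw [hmap] at this
  simpa using this

end PowOfBasic

section Lists

variable {Q : Type} [Group Q]

theorem prod_pow_zero {d : ℕ} (b : Fin d → Q) :
    (List.ofFn fun i => b i ^ (0 : ℤ)).prod = 1 := by
  simp

theorem prod_mul_prod_central {d : ℕ} (u c : Fin d → Q) (hc : ∀ i z, Commute (c i) z) :
    (List.ofFn u).prod * (List.ofFn c).prod = (List.ofFn fun i => u i * c i).prod := by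
  induction d with
  | zero => simp
  | succ n ih =>
    rw [List.ofFn_succ, List.ofFn_succ, List.ofFn_succ (f := fun i => u i * c i)]
    simp only [List.prod_cons]
    have ihtail := ih (fun i => u i.succ) (fun i => c i.succ) (fun i z => hc i.succ z)
    calc u 0 * (List.ofFn fun i => u i.succ).prod * (c 0 * (List.ofFn fun i => c i.succ).prod)
        = u 0 * c 0 * ((List.ofFn fun i => u i.succ).prod * (List.ofFn fun i => c i.succ).prod) := by
          have h := (hc 0 ((List.ofFn fun i => u i.succ).prod)).eq
          rw [mul_assoc, mul_assoc, ← mul_assoc ((List.ofFn fun i => u i.succ).prod), ← h,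
            mul_assoc, ← mul_assoc (u 0)]
      _ = u 0 * c 0 * (List.ofFn fun i => u i.succ * c i.succ).prod := by rw [ihtail]

theorem prod_central_inv {d : ℕ} (c : Fin d → Q) (hc : ∀ i z, Commute (c i) z) :
    ((List.ofFn c).prod)⁻¹ = (List.ofFn fun i => (c i)⁻¹).prod := by
  induction d with
  | zero => simp
  | succ n ih =>
    rw [List.ofFn_succ, List.ofFn_succ (f := fun i => (c i)⁻¹)]
    simp only [List.prod_cons, mul_inv_rev]
    rw [ih (fun i => c i.succ) (fun i z => hc i.succ z)]
    exact ((hc 0 ((List.ofFn fun i => (c i.succ)⁻¹).prod)).inv_left.eq).symm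

theorem prod_single {d : ℕ} (b : Fin d → Q) (i : Fin d) :
    (List.ofFn fun j => b j ^ (if j = i then (1 : ℤ) else 0)).prod = b i := by
  induction d with
  | zero => exact i.elim0
  | succ n ih =>
    rw [List.ofFn_succ]
    simp only [List.prod_cons]
    cases i using Fin.cases with
    | zero =>
      have htail : (List.ofFn fun j : Fin n =>
          b j.succ ^ (if j.succ = (0 : Fin (n+1)) then (1 : ℤ) else 0)).prod = 1 := by
        apply List.prod_eq_one
        intro x hx
        rw [List.mem_ofFn] at hx
        obtain ⟨j, rfl⟩ := hx
        simp [Fin.succ_ne_zero j]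
      rw [htail, if_pos rfl, zpow_one, mul_one]
    | succ i' =>
      have hhead : (if (0 : Fin (n+1)) = i'.succ then (1 : ℤ) else 0) = 0 :=
        if_neg (Fin.succ_ne_zero i').symm ▸ rfl
      rw [if_neg (by exact fun h => (Fin.succ_ne_zero i') h.symm), zpow_zero, one_mul]
      have := ih (fun j => b j.succ) i'
      simpa only [Fin.succ_inj] using this

end Lists

section CommIdent

variable {G : Type} [Group G]

theorem comm_pow_succ (x w : G) (n : ℕ) :
    ⁅x ^ (n + 1), w⁆ = x ^ n * ⁅x, w⁆ * (x ^ n)⁻¹ * ⁅x ^ n, w⁆ := by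
  simp only [commutatorElement_def, pow_succ]
  group

theorem comm_pow_central (x w : G) (he : ∀ z, Commute ⁅x, w⁆ z) :
    ∀ n : ℕ, ⁅x ^ n, w⁆ = ⁅x, w⁆ ^ n := by
  intro n
  induction n with
  | zero => simp [commutatorElement_def]
  | succ n ih =>
    rw [comm_pow_succ, ih]
    have h1 : x ^ n * ⁅x, w⁆ * (x ^ n)⁻¹ = ⁅x, w⁆ := by
      have h := (he (x ^ n)).eq
      rw [← h]
      group
    rw [h1]
    exact (pow_succ' _ n).symm

theorem comm_pow_formula (x g : G) (he : ∀ z, Commute ⁅x, ⁅x, g⁆⁆ z) :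
    ∀ n : ℕ, ⁅x ^ n, g⁆ = ⁅x, ⁅x, g⁆⁆ ^ n.choose 2 * ⁅x, g⁆ ^ n := by
  intro n
  induction n with
  | zero => simp [commutatorElement_def]
  | succ n ih =>
    rw [comm_pow_succ, ih]
    have hconj : x ^ n * ⁅x, g⁆ * (x ^ n)⁻¹ = ⁅x ^ n, ⁅x, g⁆⁆ * ⁅x, g⁆ := by
      rw [commutatorElement_def]; group
    rw [hconj, comm_pow_central x ⁅x, g⁆ he n]
    have hchoose : (n + 1).choose 2 = n.choose 2 + n := by
      rw [Nat.choose_succ_succ, Nat.choose_one_right, Nat.add_comm]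
    rw [hchoose, pow_add]
    calc ⁅x, ⁅x, g⁆⁆ ^ n * ⁅x, g⁆ * (⁅x, ⁅x, g⁆⁆ ^ n.choose 2 * ⁅x, g⁆ ^ n)
        = ⁅x, ⁅x, g⁆⁆ ^ n * (⁅x, g⁆ * ⁅x, ⁅x, g⁆⁆ ^ n.choose 2) * ⁅x, g⁆ ^ n := by
          simp [mul_assoc]
      _ = ⁅x, ⁅x, g⁆⁆ ^ n * (⁅x, ⁅x, g⁆⁆ ^ n.choose 2 * ⁅x, g⁆) * ⁅x, g⁆ ^ n := by
          rw [((he ⁅x, g⁆).pow_left (n.choose 2)).eq]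
      _ = (⁅x, ⁅x, g⁆⁆ ^ n * ⁅x, ⁅x, g⁆⁆ ^ n.choose 2) * (⁅x, g⁆ * ⁅x, g⁆ ^ n) := by
          simp [mul_assoc]
      _ = ⁅x, ⁅x, g⁆⁆ ^ n.choose 2 * ⁅x, ⁅x, g⁆⁆ ^ n * ⁅x, g⁆ ^ (n + 1) := by
          rw [← pow_add, Nat.add_comm n (n.choose 2), pow_add, ← pow_succ']

theorem cpow_formula (x y : G) (hc : ∀ z, Commute ⁅y, x⁆ z) :
    ∀ n : ℕ, (x * y) ^ n = ⁅y, x⁆ ^ n.choose 2 * x ^ n * y ^ n := by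
  have hyx2 : y * x = ⁅y, x⁆ * x * y := by rw [commutatorElement_def]; group
  have key : ∀ n : ℕ, y ^ n * x = ⁅y, x⁆ ^ n * x * y ^ n := by
    intro n
    induction n with
    | zero => simp
    | succ n ih =>
      calc y ^ (n+1) * x = y * (y ^ n * x) := by rw [pow_succ']; simp [mul_assoc]
        _ = y * (⁅y, x⁆ ^ n * x * y ^ n) := by rw [ih]
        _ = (y * ⁅y, x⁆ ^ n) * (x * y ^ n) := by simp [mul_assoc]
        _ = (⁅y, x⁆ ^ n * y) * (x * y ^ n) := by rw [← ((hc y).pow_left n).eq]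
        _ = ⁅y, x⁆ ^ n * (y * x) * y ^ n := by simp [mul_assoc]
        _ = ⁅y, x⁆ ^ n * (⁅y, x⁆ * x * y) * y ^ n := by rw [hyx2]
        _ = (⁅y, x⁆ ^ n * ⁅y, x⁆) * x * (y * y ^ n) := by simp [mul_assoc]
        _ = ⁅y, x⁆ ^ (n+1) * x * y ^ (n+1) := by rw [← pow_succ, ← pow_succ']
  intro n
  induction n with
  | zero => simp
  | succ n ih =>
    have hchoose : (n + 1).choose 2 = n.choose 2 + n := by
      rw [Nat.choose_succ_succ, Nat.choose_one_right, Nat.add_comm]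
    rw [pow_succ, ih, hchoose, pow_add]
    calc ⁅y, x⁆ ^ n.choose 2 * x ^ n * y ^ n * (x * y)
        = ⁅y, x⁆ ^ n.choose 2 * x ^ n * (y ^ n * x) * y := by simp [mul_assoc]
      _ = ⁅y, x⁆ ^ n.choose 2 * x ^ n * (⁅y, x⁆ ^ n * x * y ^ n) * y := by rw [key n]
      _ = ⁅y, x⁆ ^ n.choose 2 * (x ^ n * ⁅y, x⁆ ^ n) * (x * (y ^ n * y)) := by
          simp [mul_assoc]
      _ = ⁅y, x⁆ ^ n.choose 2 * (⁅y, x⁆ ^ n * x ^ n) * (x * (y ^ n * y)) := by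
          rw [((hc (x ^ n)).pow_left n).eq]
      _ = ⁅y, x⁆ ^ n.choose 2 * ⁅y, x⁆ ^ n * x ^ (n+1) * y ^ (n+1) := by
          rw [pow_succ x n, pow_succ y n]
          simp [mul_assoc]

theorem cpow_odd {p : ℕ} (hp : p.Prime) (hp2 : p ≠ 2) (x y : G)
    (hc : ∀ z, Commute ⁅y, x⁆ z) (hcp : ⁅y, x⁆ ^ p = 1) : (x * y) ^ p = x ^ p * y ^ p := by
  rw [cpow_formula x y hc p]
  have h2 : 2 ∣ p - 1 := by
    have := hp.two_le
    have hodd := hp.odd_of_ne_two hp2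
    rw [Nat.odd_iff] at hodd
    omega
  have hch : p.choose 2 = p * ((p - 1) / 2) := by
    rw [Nat.choose_two_right, Nat.mul_div_assoc p h2]
  rw [hch, pow_mul, hcp, one_pow, one_mul]

end CommIdent
section Frattini

variable {p : ℕ}

theorem card_quotient_lt {G : Type} [Group G] [Finite G] (K : Subgroup G) [K.Normal]
    (hK : K ≠ ⊥) : Nat.card (G ⧸ K) < Nat.card G := by
  have hcard := Subgroup.card_eq_card_quotient_mul_card_subgroup K
  have hK2 : 2 ≤ Nat.card K := K.one_lt_card_iff_ne_bot.mpr hK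
  have hq : 0 < Nat.card (G ⧸ K) := Nat.card_pos
  nlinarith [hcard, hK2, hq]

/-- In a finite `p`-group, if every element is (a product of) `p`-th powers, the group
is trivial. -/
theorem subsingleton_of_powOf_eq_top (hp : p.Prime) :
    ∀ n : ℕ, ∀ (H : Type) [Group H] [Finite H], Nat.card H = n → IsPGroup p H →
      powOf (⊤ : Subgroup H) p = ⊤ → Subsingleton H := by
  intro n
  induction n using Nat.strong_induction_on with
  | _ n IH =>
    intro H _ _ hcard hH htop
    haveI : Fact p.Prime := ⟨hp⟩
    by_cases hC : ⁅(⊤ : Subgroup H), (⊤ : Subgroup H)⁆ = ⊥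
    · -- abelian case
      have hcomm : ∀ x y : H, Commute x y := by
        intro x y
        have : ⁅x, y⁆ ∈ ⁅(⊤ : Subgroup H), (⊤ : Subgroup H)⁆ :=
          Subgroup.commutator_mem_commutator (Subgroup.mem_top x) (Subgroup.mem_top y)
        rw [hC, Subgroup.mem_bot] at this
        exact commutatorElement_eq_one_iff_commute.mp this
      let S : Subgroup H :=
        { carrier := Set.range (fun x : H => x ^ p)
          one_mem' := ⟨1, one_pow p⟩
          mul_mem' := by
            rintro a b ⟨x, rfl⟩ ⟨y, rfl⟩
            exact ⟨x * y, by simpa using ((hcomm x y).mul_pow p)⟩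
          inv_mem' := by
            rintro a ⟨x, rfl⟩
            exact ⟨x⁻¹, by simpa using (inv_pow x p)⟩ }
      have hS : powOf (⊤ : Subgroup H) p = S := by
        unfold powOf
        rw [show ((fun x : H => x ^ p) '' ((⊤ : Subgroup H) : Set H)) = (S : Set H) by
          rw [Subgroup.coe_top, Set.image_univ]; rfl]
        exact Subgroup.closure_eq S
      have hsurj : Function.Surjective (fun x : H => x ^ p) := by
        intro y
        have : y ∈ S := by rw [← hS, htop]; trivial
        exact this
      have hinj := Finite.injective_iff_surjective.mpr hsurj
      have hiter : ∀ m : ℕ, Function.Injective (fun x : H => x ^ (p ^ m)) := by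
        intro m
        induction m with
        | zero => exact fun a b h => by simpa using h
        | succ m ihm =>
          have : (fun x : H => x ^ (p ^ (m + 1))) = (fun y : H => y ^ (p ^ m)) ∘ (fun x : H => x ^ p) := by
            funext x
            simp [← pow_mul, pow_succ']
          rw [this]
          exact ihm.comp hinj
      haveI := Fintype.ofFinite H
      obtain ⟨m, hm⟩ := IsPGroup.iff_card.mp hH
      constructor
      intro a b
      have hcard1 : ∀ x : H, x ^ (p ^ m) = 1 := by
        intro x
        rw [← hm, Nat.card_eq_fintype_card]
        exact pow_card_eq_one
      have : a ^ (p ^ m) = b ^ (p ^ m) := by rw [hcard1, hcard1]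
      exact hiter m this
    · -- nonabelian case: quotient by the commutator subgroup
      set C := ⁅(⊤ : Subgroup H), (⊤ : Subgroup H)⁆ with hCdef
      haveI : C.Normal := Subgroup.commutator_normal ⊤ ⊤
      let π := QuotientGroup.mk' C
      have hsurj := QuotientGroup.mk'_surjective C
      have hlt : Nat.card (H ⧸ C) < n := hcard ▸ card_quotient_lt C hC
      have htop' : powOf (⊤ : Subgroup (H ⧸ C)) p = ⊤ := by
        have := congrArg (Subgroup.map π) htop
        rw [map_powOf, Subgroup.map_top_of_surjective π hsurj] at this
        exact this
      have hsub : Subsingleton (H ⧸ C) :=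
        IH _ hlt (H ⧸ C) rfl (hH.to_quotient C) htop'
      -- C = ⊤
      have hCtop : C = ⊤ := by
        rw [eq_top_iff]
        intro x _
        have : π x = π 1 := Subsingleton.elim _ _
        rw [map_one] at this
        exact (QuotientGroup.eq_one_iff x).mp this
      -- lower central series is constantly ⊤
      have hLCS : ∀ k, Subgroup.lowerCentralSeries (⊤ : Subgroup H) k = ⊤ := by
        intro k
        induction k with
        | zero => rfl
        | succ k ihk =>
          show ⁅Subgroup.lowerCentralSeries (⊤ : Subgroup H) k, ⊤⁆ = ⊤
          rw [ihk, ← hCdef, hCtop]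
      obtain ⟨m, hm⟩ := nilpotent_iff_lowerCentralSeries.mp (hH.isNilpotent)
      rw [hLCS m] at hm
      constructor
      intro a b
      have ha : a ∈ (⊥ : Subgroup H) := hm ▸ Subgroup.mem_top a
      have hb : b ∈ (⊥ : Subgroup H) := hm ▸ Subgroup.mem_top b
      rw [Subgroup.mem_bot] at ha hb
      rw [ha, hb]

theorem eq_bot_of_le_powOf (hp : p.Prime) {G : Type} [Group G] [Finite G]
    (hG : IsPGroup p G) (A : Subgroup G) (h : A ≤ powOf A p) : A = ⊥ := by
  by_contra hA
  haveI : Nontrivial A := A.nontrivial_iff_ne_bot.mpr hA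
  have hmap : Subgroup.map A.subtype (powOf (⊤ : Subgroup A) p) = powOf A p := by
    rw [map_powOf]
    congr 1
    rw [← MonoidHom.range_eq_map, A.range_subtype]
  have hle : Subgroup.map A.subtype ⊤ ≤ Subgroup.map A.subtype (powOf (⊤ : Subgroup A) p) := by
    rw [hmap, ← MonoidHom.range_eq_map, A.range_subtype]
    exact h
  have htople : (⊤ : Subgroup A) ≤ powOf (⊤ : Subgroup A) p :=
    (Subgroup.map_le_map_iff_of_injective A.subtype_injective).mp hle
  have htop : powOf (⊤ : Subgroup A) p = ⊤ := top_le_iff.mp htople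
  have := subsingleton_of_powOf_eq_top hp (Nat.card A) A rfl (hG.to_subgroup A) htop
  exact not_subsingleton_iff_nontrivial.mpr ‹Nontrivial A› this

theorem commutator_sup_top_le {G : Type} [Group G] (H K : Subgroup G)
    [hH : H.Normal] [hK : K.Normal] :
    ⁅H ⊔ K, (⊤ : Subgroup G)⁆ ≤ ⁅H, (⊤ : Subgroup G)⁆ ⊔ ⁅K, (⊤ : Subgroup G)⁆ := by
  set R := ⁅H, (⊤ : Subgroup G)⁆ ⊔ ⁅K, (⊤ : Subgroup G)⁆ with hR
  haveI hRn : R.Normal := Subgroup.sup_normal _ _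
  rw [Subgroup.commutator_le]
  let S : Subgroup G :=
    { carrier := {g : G | ∀ y : G, ⁅g, y⁆ ∈ R}
      one_mem' := by
        intro y
        have : ⁅(1 : G), y⁆ = 1 := by simp [commutatorElement_def]
        rw [this]; exact R.one_mem
      mul_mem' := by
        intro a b ha hb y
        have hid : ⁅a * b, y⁆ = a * ⁅b, y⁆ * a⁻¹ * ⁅a, y⁆ := by
          simp only [commutatorElement_def]; group
        rw [hid]
        exact R.mul_mem (hRn.conj_mem _ (hb y) a) (ha y)
      inv_mem' := by
        intro a ha y
        have hid : ⁅a⁻¹, y⁆ = a⁻¹ * ⁅a, y⁆⁻¹ * a := by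
          simp only [commutatorElement_def]; group
        rw [hid]
        simpa using hRn.conj_mem _ (R.inv_mem (ha y)) a⁻¹ }
  have hHS : H ≤ S := fun h hh y =>
    Subgroup.mem_sup_left (Subgroup.commutator_mem_commutator hh (Subgroup.mem_top y))
  have hKS : K ≤ S := fun k hk y =>
    Subgroup.mem_sup_right (Subgroup.commutator_mem_commutator hk (Subgroup.mem_top y))
  intro g hg y _
  exact (sup_le hHS hKS) hg y

/-- "No Frattini": a normal subgroup `A` of a finite `p`-group with
`A ≤ A^p ⊔ ⁅A, G⁆` is trivial. -/
theorem nofrat (hp : p.Prime) {G : Type} [Group G] [Finite G] (hG : IsPGroup p G)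
    (A : Subgroup G) [hA : A.Normal]
    (h : A ≤ powOf A p ⊔ ⁅A, (⊤ : Subgroup G)⁆) : A = ⊥ := by
  haveI : Fact p.Prime := ⟨hp⟩
  haveI hApn : (powOf A p).Normal := powOf_normal hA p
  -- iterated commutators
  let D : ℕ → Subgroup G := fun k => Nat.rec ⁅A, (⊤ : Subgroup G)⁆ (fun _ S => ⁅S, ⊤⁆) k
  have hD0 : D 0 = ⁅A, (⊤ : Subgroup G)⁆ := rfl
  have hDs : ∀ k, D (k + 1) = ⁅D k, (⊤ : Subgroup G)⁆ := fun k => rfl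
  have hDnormal : ∀ k, (D k).Normal := by
    intro k
    induction k with
    | zero => exact Subgroup.commutator_normal A ⊤
    | succ k ihk => exact @Subgroup.commutator_normal G _ (D k) ⊤ ihk inferInstance
  have hDle : ∀ k, D k ≤ Subgroup.lowerCentralSeries (⊤ : Subgroup G) (k + 1) := by
    intro k
    induction k with
    | zero =>
      show ⁅A, (⊤ : Subgroup G)⁆ ≤ ⁅Subgroup.lowerCentralSeries (⊤ : Subgroup G) 0, ⊤⁆
      exact Subgroup.commutator_mono le_top le_rfl
    | succ k ihk =>
      show ⁅D k, (⊤ : Subgroup G)⁆ ≤ ⁅Subgroup.lowerCentralSeries (⊤ : Subgroup G) (k + 1), ⊤⁆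
      exact Subgroup.commutator_mono ihk le_rfl
  have key : ∀ k, A ≤ powOf A p ⊔ D k := by
    intro k
    induction k with
    | zero => exact h
    | succ k ihk =>
      have h1 : ⁅A, (⊤ : Subgroup G)⁆ ≤ ⁅powOf A p ⊔ D k, (⊤ : Subgroup G)⁆ :=
        Subgroup.commutator_mono ihk le_rfl
      have h2 : ⁅powOf A p ⊔ D k, (⊤ : Subgroup G)⁆ ≤
          ⁅powOf A p, (⊤ : Subgroup G)⁆ ⊔ ⁅D k, (⊤ : Subgroup G)⁆ :=
        @commutator_sup_top_le G _ (powOf A p) (D k) hApn (hDnormal k)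
      have h3 : ⁅powOf A p, (⊤ : Subgroup G)⁆ ≤ powOf A p :=
        @Subgroup.commutator_le_left G _ (powOf A p) ⊤ hApn
      have h4 : ⁅A, (⊤ : Subgroup G)⁆ ≤ powOf A p ⊔ D (k + 1) := by
        refine le_trans h1 (le_trans h2 ?_)
        rw [hDs k]
        exact sup_le_sup_right h3 _
      calc A ≤ powOf A p ⊔ ⁅A, (⊤ : Subgroup G)⁆ := h
        _ ≤ powOf A p ⊔ (powOf A p ⊔ D (k + 1)) := sup_le_sup_left h4 _
        _ = powOf A p ⊔ D (k + 1) := by rw [← sup_assoc, sup_idem]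
  obtain ⟨m, hm⟩ := nilpotent_iff_lowerCentralSeries.mp (hG.isNilpotent)
  have hDm : D m = ⊥ := by
    have h1 : Subgroup.lowerCentralSeries (⊤ : Subgroup G) (m + 1) = ⊥ := by
      show ⁅Subgroup.lowerCentralSeries (⊤ : Subgroup G) m, ⊤⁆ = ⊥
      rw [hm]
      exact Subgroup.commutator_bot_left _
    exact le_bot_iff.mp (h1 ▸ hDle m)
  have : A ≤ powOf A p := by
    have := key m
    rwa [hDm, sup_bot_eq] at this
  exact eq_bot_of_le_powOf hp hG A this

end Frattini
section Core1

variable {p : ℕ}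

theorem core1_odd (hp : p.Prime) (hp2 : p ≠ 2) :
    ∀ n : ℕ, ∀ (G : Type) [Group G] [Finite G], Nat.card G = n → IsPGroup p G →
      ∀ (N : Subgroup G), N.Normal → ⁅N, (⊤ : Subgroup G)⁆ ≤ powOf N p →
      ⁅powOf N p, (⊤ : Subgroup G)⁆ ≤ powOf (powOf N p) p := by
  intro n
  induction n using Nat.strong_induction_on with
  | _ n IH =>
    intro G _ _ hcard hG N hN hpe
    haveI := hN
    haveI hMn : (powOf N p).Normal := powOf_normal hN p
    haveI hBn : (powOf (powOf N p) p).Normal := powOf_normal hMn p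
    haveI hAn : (⁅powOf N p, (⊤ : Subgroup G)⁆).Normal := Subgroup.commutator_normal _ _
    haveI hApn : (powOf ⁅powOf N p, (⊤ : Subgroup G)⁆ p).Normal := powOf_normal hAn p
    haveI hAcn : (⁅⁅powOf N p, (⊤ : Subgroup G)⁆, (⊤ : Subgroup G)⁆).Normal :=
      Subgroup.commutator_normal _ _
    by_cases hB : powOf (powOf N p) p = ⊥
    · by_cases hK : powOf ⁅powOf N p, (⊤ : Subgroup G)⁆ p ⊔
          ⁅⁅powOf N p, (⊤ : Subgroup G)⁆, (⊤ : Subgroup G)⁆ = ⊥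
      · -- degenerate case: direct computation
        obtain ⟨hKp, hKc⟩ := sup_eq_bot_iff.mp hK
        rw [Subgroup.commutator_le]
        intro m hm y _
        have hcen : powOf N p ≤ Subgroup.centralizer {y} := by
          apply powOf_le
          intro x hx
          have hc_mem : ⁅x, y⁆ ∈ powOf N p :=
            hpe (Subgroup.commutator_mem_commutator hx (Subgroup.mem_top y))
          have hcp : ⁅x, y⁆ ^ p = 1 := by
            have h0 := pow_mem_powOf hc_mem p
            rwa [hB, Subgroup.mem_bot] at h0
          have hcx : ⁅⁅x, y⁆, x⁆ ∈ ⁅powOf N p, (⊤ : Subgroup G)⁆ :=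
            Subgroup.commutator_mem_commutator hc_mem (Subgroup.mem_top x)
          have hinv : ⁅x, ⁅x, y⁆⁆ = ⁅⁅x, y⁆, x⁆⁻¹ := (commutatorElement_inv ⁅x, y⁆ x).symm
          have hecent : ∀ z, Commute ⁅x, ⁅x, y⁆⁆ z := by
            intro z
            have h1 : ⁅⁅⁅x, y⁆, x⁆, z⁆ ∈ ⁅⁅powOf N p, (⊤ : Subgroup G)⁆, (⊤ : Subgroup G)⁆ :=
              Subgroup.commutator_mem_commutator hcx (Subgroup.mem_top z)
            rw [hKc, Subgroup.mem_bot] at h1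
            rw [hinv]
            exact (commutatorElement_eq_one_iff_commute.mp h1).inv_left
          have hep : ⁅x, ⁅x, y⁆⁆ ^ p = 1 := by
            have h1 := pow_mem_powOf hcx p
            rw [hKp, Subgroup.mem_bot] at h1
            rw [hinv, inv_pow, h1, inv_one]
          have hxp : ⁅x ^ p, y⁆ = 1 := by
            rw [comm_pow_formula x y hecent p, hcp, mul_one]
            have h2 : 2 ∣ p - 1 := by
              have := hp.two_le
              have hodd := hp.odd_of_ne_two hp2
              rw [Nat.odd_iff] at hodd
              omega
            rw [Nat.choose_two_right, Nat.mul_div_assoc p h2, pow_mul, hep, one_pow]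
          rw [Subgroup.mem_centralizer_iff]
          intro h hh
          rw [Set.mem_singleton_iff] at hh
          subst hh
          exact ((commutatorElement_eq_one_iff_commute.mp hxp).symm).eq
        have h1 := hcen hm
        rw [Subgroup.mem_centralizer_iff] at h1
        have hcomm : Commute m y := Commute.symm (show Commute y m from h1 y rfl)
        rw [commutatorElement_eq_one_iff_commute.mpr hcomm]
        exact Subgroup.one_mem _
      · -- quotient by K
        set A := ⁅powOf N p, (⊤ : Subgroup G)⁆ with hAdef
        set K := powOf A p ⊔ ⁅A, (⊤ : Subgroup G)⁆ with hKdef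
        haveI hKn : K.Normal := Subgroup.sup_normal _ _
        set π := QuotientGroup.mk' K with hπ
        have hsurj := QuotientGroup.mk'_surjective K
        have hlt : Nat.card (G ⧸ K) < n := hcard ▸ card_quotient_lt K hK
        have hpe' : ⁅Subgroup.map π N, (⊤ : Subgroup (G ⧸ K))⁆ ≤ powOf (Subgroup.map π N) p := by
          have h0 : Subgroup.map π ⁅N, (⊤ : Subgroup G)⁆ ≤ Subgroup.map π (powOf N p) :=
            Subgroup.map_mono hpe
          simpa only [Subgroup.map_commutator, Subgroup.map_top_of_surjective π hsurj,
            map_powOf] using h0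
        have hconc := IH _ hlt (G ⧸ K) rfl (hG.to_quotient K) (Subgroup.map π N)
          (hN.map π hsurj) hpe'
        have hAle : Subgroup.map π A ≤ Subgroup.map π (powOf (powOf N p) p) := by
          simpa only [hAdef, Subgroup.map_commutator, Subgroup.map_top_of_surjective π hsurj,
            map_powOf] using hconc
        have hmapB : Subgroup.map π (powOf (powOf N p) p) = ⊥ := by
          rw [hB]
          exact Subgroup.map_bot π
        have hAK : A ≤ K := by
          intro a ha
          have h2 : π a ∈ (⊥ : Subgroup (G ⧸ K)) := hmapB ▸ hAle (Subgroup.mem_map_of_mem π ha)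
          rw [Subgroup.mem_bot] at h2
          exact (QuotientGroup.eq_one_iff a).mp h2
        have hAbot : A = ⊥ := nofrat hp hG A (hKdef ▸ hAK)
        rw [hAbot]
        exact bot_le
    · -- quotient by B
      set B := powOf (powOf N p) p with hBdef
      set π := QuotientGroup.mk' B with hπ
      have hsurj := QuotientGroup.mk'_surjective B
      have hlt : Nat.card (G ⧸ B) < n := hcard ▸ card_quotient_lt B hB
      have hpe' : ⁅Subgroup.map π N, (⊤ : Subgroup (G ⧸ B))⁆ ≤ powOf (Subgroup.map π N) p := by
        have h0 : Subgroup.map π ⁅N, (⊤ : Subgroup G)⁆ ≤ Subgroup.map π (powOf N p) :=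
          Subgroup.map_mono hpe
        simpa only [Subgroup.map_commutator, Subgroup.map_top_of_surjective π hsurj,
          map_powOf] using h0
      have hconc := IH _ hlt (G ⧸ B) rfl (hG.to_quotient B) (Subgroup.map π N)
        (hN.map π hsurj) hpe'
      have hAle : Subgroup.map π ⁅powOf N p, (⊤ : Subgroup G)⁆ ≤ Subgroup.map π B := by
        simpa only [hBdef, Subgroup.map_commutator, Subgroup.map_top_of_surjective π hsurj,
          map_powOf] using hconc
      have hmapB : Subgroup.map π B = ⊥ := by
        rw [eq_bot_iff]
        rintro q ⟨b, hb, rfl⟩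
        rw [Subgroup.mem_bot]
        exact (QuotientGroup.eq_one_iff b).mpr hb
      intro a ha
      have h2 : π a ∈ (⊥ : Subgroup (G ⧸ B)) := hmapB ▸ hAle (Subgroup.mem_map_of_mem π ha)
      rw [Subgroup.mem_bot] at h2
      exact (QuotientGroup.eq_one_iff a).mp h2

theorem core1_two :
    ∀ n : ℕ, ∀ (G : Type) [Group G] [Finite G], Nat.card G = n → IsPGroup 2 G →
      ∀ (N : Subgroup G), N.Normal → ⁅N, (⊤ : Subgroup G)⁆ ≤ powOf (powOf N 2) 2 →
      ⁅powOf N 2, (⊤ : Subgroup G)⁆ ≤ powOf (powOf (powOf N 2) 2) 2 := by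
  intro n
  induction n using Nat.strong_induction_on with
  | _ n IH =>
    intro G _ _ hcard hG N hN hpe
    haveI := hN
    haveI hMn : (powOf N 2).Normal := powOf_normal hN 2
    haveI hM2n : (powOf (powOf N 2) 2).Normal := powOf_normal hMn 2
    haveI hBn : (powOf (powOf (powOf N 2) 2) 2).Normal := powOf_normal hM2n 2
    haveI hAn : (⁅powOf N 2, (⊤ : Subgroup G)⁆).Normal := Subgroup.commutator_normal _ _
    haveI hApn : (powOf ⁅powOf N 2, (⊤ : Subgroup G)⁆ 2).Normal := powOf_normal hAn 2
    haveI hAcn : (⁅⁅powOf N 2, (⊤ : Subgroup G)⁆, (⊤ : Subgroup G)⁆).Normal :=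
      Subgroup.commutator_normal _ _
    by_cases hB : powOf (powOf (powOf N 2) 2) 2 = ⊥
    · by_cases hK : powOf ⁅powOf N 2, (⊤ : Subgroup G)⁆ 2 ⊔
          ⁅⁅powOf N 2, (⊤ : Subgroup G)⁆, (⊤ : Subgroup G)⁆ = ⊥
      · -- degenerate case
        obtain ⟨hKp, hKc⟩ := sup_eq_bot_iff.mp hK
        rw [Subgroup.commutator_le]
        intro m hm y _
        have hcen : powOf N 2 ≤ Subgroup.centralizer {y} := by
          apply powOf_le
          intro x hx
          -- c := ⁅x,y⁆ ∈ (M)^2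
          have hc_mem : ⁅x, y⁆ ∈ powOf (powOf N 2) 2 :=
            hpe (Subgroup.commutator_mem_commutator hx (Subgroup.mem_top y))
          have hcp : ⁅x, y⁆ ^ 2 = 1 := by
            have h0 := pow_mem_powOf hc_mem 2
            rwa [hB, Subgroup.mem_bot] at h0
          -- e := ⁅x, ⁅x,y⁆⁆ = 1 : every element of (M)^2 commutes with x
          have hcenx : powOf (powOf N 2) 2 ≤ Subgroup.centralizer {x} := by
            apply powOf_le
            intro u hu
            have hf : ⁅u, x⁆ ∈ ⁅powOf N 2, (⊤ : Subgroup G)⁆ :=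
              Subgroup.commutator_mem_commutator hu (Subgroup.mem_top x)
            have hfc : ∀ z, Commute ⁅u, x⁆ z := by
              intro z
              have h1 : ⁅⁅u, x⁆, z⁆ ∈ ⁅⁅powOf N 2, (⊤ : Subgroup G)⁆, (⊤ : Subgroup G)⁆ :=
                Subgroup.commutator_mem_commutator hf (Subgroup.mem_top z)
              rw [hKc, Subgroup.mem_bot] at h1
              exact commutatorElement_eq_one_iff_commute.mp h1
            have hf2 : ⁅u, x⁆ ^ 2 = 1 := by
              have h1 := pow_mem_powOf hf 2
              rwa [hKp, Subgroup.mem_bot] at h1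
            have hu2 : ⁅u ^ 2, x⁆ = 1 := by
              rw [comm_pow_central u x hfc 2, hf2]
            rw [Subgroup.mem_centralizer_iff]
            intro h hh
            rw [Set.mem_singleton_iff] at hh
            subst hh
            exact ((commutatorElement_eq_one_iff_commute.mp hu2).symm).eq
          have hxc : Commute x ⁅x, y⁆ := by
            have h1 := hcenx hc_mem
            rw [Subgroup.mem_centralizer_iff] at h1
            exact show Commute x ⁅x, y⁆ from h1 x rfl
          have he1 : ⁅x, ⁅x, y⁆⁆ = 1 := commutatorElement_eq_one_iff_commute.mpr hxc
          have hecent : ∀ z, Commute ⁅x, ⁅x, y⁆⁆ z := by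
            intro z
            rw [he1]
            exact Commute.one_left z
          have hxp : ⁅x ^ 2, y⁆ = 1 := by
            rw [comm_pow_formula x y hecent 2, hcp, mul_one, he1, one_pow]
          rw [Subgroup.mem_centralizer_iff]
          intro h hh
          rw [Set.mem_singleton_iff] at hh
          subst hh
          exact ((commutatorElement_eq_one_iff_commute.mp hxp).symm).eq
        have h1 := hcen hm
        rw [Subgroup.mem_centralizer_iff] at h1
        have hcomm : Commute m y := Commute.symm (show Commute y m from h1 y rfl)
        rw [commutatorElement_eq_one_iff_commute.mpr hcomm]
        exact Subgroup.one_mem _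
      · -- quotient by K
        set A := ⁅powOf N 2, (⊤ : Subgroup G)⁆ with hAdef
        set K := powOf A 2 ⊔ ⁅A, (⊤ : Subgroup G)⁆ with hKdef
        haveI hKn : K.Normal := Subgroup.sup_normal _ _
        set π := QuotientGroup.mk' K with hπ
        have hsurj := QuotientGroup.mk'_surjective K
        have hlt : Nat.card (G ⧸ K) < n := hcard ▸ card_quotient_lt K hK
        have hpe' : ⁅Subgroup.map π N, (⊤ : Subgroup (G ⧸ K))⁆ ≤
            powOf (powOf (Subgroup.map π N) 2) 2 := by
          have h0 : Subgroup.map π ⁅N, (⊤ : Subgroup G)⁆ ≤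
              Subgroup.map π (powOf (powOf N 2) 2) := Subgroup.map_mono hpe
          simpa only [Subgroup.map_commutator, Subgroup.map_top_of_surjective π hsurj,
            map_powOf] using h0
        have hconc := IH _ hlt (G ⧸ K) rfl (hG.to_quotient K) (Subgroup.map π N)
          (hN.map π hsurj) hpe'
        have hAle : Subgroup.map π A ≤ Subgroup.map π (powOf (powOf (powOf N 2) 2) 2) := by
          simpa only [hAdef, Subgroup.map_commutator, Subgroup.map_top_of_surjective π hsurj,
            map_powOf] using hconc
        have hmapB : Subgroup.map π (powOf (powOf (powOf N 2) 2) 2) = ⊥ := by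
          rw [hB]
          exact Subgroup.map_bot π
        have hAK : A ≤ K := by
          intro a ha
          have h2 : π a ∈ (⊥ : Subgroup (G ⧸ K)) := hmapB ▸ hAle (Subgroup.mem_map_of_mem π ha)
          rw [Subgroup.mem_bot] at h2
          exact (QuotientGroup.eq_one_iff a).mp h2
        have hAbot : A = ⊥ := nofrat Nat.prime_two hG A (hKdef ▸ hAK)
        rw [hAbot]
        exact bot_le
    · -- quotient by B
      set B := powOf (powOf (powOf N 2) 2) 2 with hBdef
      set π := QuotientGroup.mk' B with hπ
      have hsurj := QuotientGroup.mk'_surjective B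
      have hlt : Nat.card (G ⧸ B) < n := hcard ▸ card_quotient_lt B hB
      have hpe' : ⁅Subgroup.map π N, (⊤ : Subgroup (G ⧸ B))⁆ ≤
          powOf (powOf (Subgroup.map π N) 2) 2 := by
        have h0 : Subgroup.map π ⁅N, (⊤ : Subgroup G)⁆ ≤
            Subgroup.map π (powOf (powOf N 2) 2) := Subgroup.map_mono hpe
        simpa only [Subgroup.map_commutator, Subgroup.map_top_of_surjective π hsurj,
          map_powOf] using h0
      have hconc := IH _ hlt (G ⧸ B) rfl (hG.to_quotient B) (Subgroup.map π N)
        (hN.map π hsurj) hpe'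
      have hAle : Subgroup.map π ⁅powOf N 2, (⊤ : Subgroup G)⁆ ≤ Subgroup.map π B := by
        simpa only [hBdef, Subgroup.map_commutator, Subgroup.map_top_of_surjective π hsurj,
          map_powOf] using hconc
      have hmapB : Subgroup.map π B = ⊥ := by
        rw [eq_bot_iff]
        rintro q ⟨b, hb, rfl⟩
        rw [Subgroup.mem_bot]
        exact (QuotientGroup.eq_one_iff b).mpr hb
      intro a ha
      have h2 : π a ∈ (⊥ : Subgroup (G ⧸ B)) := hmapB ▸ hAle (Subgroup.mem_map_of_mem π ha)
      rw [Subgroup.mem_bot] at h2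
      exact (QuotientGroup.eq_one_iff a).mp h2

end Core1
section ZProd

variable {Q : Type} [Group Q]

def zprodSubgroup {d : ℕ} (b : Fin d → Q) (hb : ∀ i z, Commute (b i) z) : Subgroup Q where
  carrier := {q | ∃ m : Fin d → ℤ, q = (List.ofFn fun i => b i ^ m i).prod}
  one_mem' := ⟨0, by simpa using (prod_pow_zero b).symm⟩
  mul_mem' := by
    rintro q r ⟨m, rfl⟩ ⟨m', rfl⟩
    refine ⟨m + m', ?_⟩
    rw [prod_mul_prod_central (fun i => b i ^ m i) (fun i => b i ^ m' i)
      (fun i z => (hb i z).zpow_left (m' i))]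
    have hfe : (fun i => b i ^ m i * b i ^ m' i) = fun i => b i ^ (m + m') i := by
      funext i
      rw [Pi.add_apply, zpow_add]
    rw [hfe]
  inv_mem' := by
    rintro q ⟨m, rfl⟩
    refine ⟨-m, ?_⟩
    rw [prod_central_inv _ (fun i z => (hb i z).zpow_left (m i))]
    have hfe : (fun i => (b i ^ m i)⁻¹) = fun i => b i ^ (-m) i := by
      funext i
      rw [Pi.neg_apply, zpow_neg]
    rw [hfe]

theorem mem_zprodSubgroup {d : ℕ} {b : Fin d → Q} {hb : ∀ i z, Commute (b i) z} {q : Q} :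
    q ∈ zprodSubgroup b hb ↔ ∃ m : Fin d → ℤ, q = (List.ofFn fun i => b i ^ m i).prod :=
  Iff.rfl

theorem list_pow_hom {P : Type} [Group P] (π : P →* Q) (V : Subgroup P) (pp : ℕ)
    (Hhom : ∀ u w, u ∈ V → w ∈ V → π ((u * w) ^ pp) = π (u ^ pp) * π (w ^ pp)) :
    ∀ {n : ℕ} (f : Fin n → P), (∀ i, f i ∈ V) →
      π ((List.ofFn f).prod ^ pp) = (List.ofFn fun i => π (f i ^ pp)).prod := by
  intro n
  induction n with
  | zero => intro f _; simp
  | succ n ih =>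
    intro f hf
    rw [List.ofFn_succ, List.prod_cons, List.ofFn_succ (f := fun i => π (f i ^ pp)),
      List.prod_cons]
    have hrest : (List.ofFn fun i => f i.succ).prod ∈ V := by
      apply Subgroup.list_prod_mem
      intro x hx
      rw [List.mem_ofFn] at hx
      obtain ⟨j, rfl⟩ := hx
      exact hf j.succ
    rw [Hhom (f 0) _ (hf 0) hrest, ih (fun i => f i.succ) (fun i => hf i.succ)]

end ZProd

theorem map_ofFn_prod {P' Q' : Type} [Group P'] [Group Q'] (π : P' →* Q') {n : ℕ}
    (f : Fin n → P') :
    π (List.ofFn f).prod = (List.ofFn fun i => π (f i)).prod := by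
  rw [← List.prod_hom _ π, List.map_ofFn]
  rfl
/-- The chain `V 0 = ⊤`, `V (k+1) = (V k)^p`. -/
def Vchain {P : Type} [Group P] (p : ℕ) : ℕ → Subgroup P
  | 0 => ⊤
  | (k + 1) => powOf (Vchain p k) p
/-- a powerful finite `p`-group generated by `d` elements is a product of
at most `d` cyclic subgroups; in particular if it has exponent dividing `e` then
`|P| ≤ e^d`. -/
theorem powerful_product_of_cyclic
    (p : ℕ) (hp : p.Prime) (P : Type) [Group P] [Finite P]
    (hP : IsPGroup p P) (hpow : IsPowerful P p)
    (d : ℕ) (xs : Fin d → P) (hgen : Subgroup.closure (Set.range xs) = ⊤) :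
    (∃ c : Fin d → P, ∀ g : P, ∃ k : Fin d → ℤ,
        g = ((List.finRange d).map (fun i => c i ^ k i)).prod) ∧
    (∀ e : ℕ, 0 < e → (∀ x : P, x ^ e = 1) → Nat.card P ≤ e ^ d) := by
  haveI : Fact p.Prime := ⟨hp⟩
  -- the descending chain of iterated power subgroups
  set V : ℕ → Subgroup P := Vchain p with hVdef
  have hVs : ∀ k, V (k + 1) = powOf (V k) p := fun _ => rfl
  have hVnormal : ∀ k, (V k).Normal := by
    intro k
    induction k with
    | zero => exact (inferInstance : (⊤ : Subgroup P).Normal)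
    | succ k ih => exact powOf_normal ih p
  have hVle : ∀ k, V (k + 1) ≤ V k := fun k => powOf_le_self (V k) p
  -- powerfully-embedded chain
  have hPE2 : p = 2 → ∀ k, ⁅V k, (⊤ : Subgroup P)⁆ ≤ V (k + 2) := by
    intro hp2 k
    induction k with
    | zero =>
      have hc : ⁅(⊤ : Subgroup P), (⊤ : Subgroup P)⁆ ≤ powOf ⊤ 4 := by
        have h := hpow
        unfold IsPowerful at h
        rwa [if_pos hp2] at h
      have h4 : powOf (⊤ : Subgroup P) 4 ≤ powOf (powOf (⊤ : Subgroup P) p) p := by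
        have h0 := powOf_mul_le (⊤ : Subgroup P) p p
        have hpp : p * p = 4 := by rw [hp2]
        rwa [hpp] at h0
      exact le_trans hc h4
    | succ k ih =>
      have ih' : ⁅V k, (⊤ : Subgroup P)⁆ ≤ powOf (powOf (V k) 2) 2 := by
        have h0 : ⁅V k, (⊤ : Subgroup P)⁆ ≤ powOf (powOf (V k) p) p := ih
        rwa [hp2] at h0
      have hP2 : IsPGroup 2 P := by rw [← hp2]; exact hP
      have hconc := core1_two (Nat.card P) P rfl hP2 (V k) (hVnormal k) ih'
      have hgoal : ⁅powOf (V k) p, (⊤ : Subgroup P)⁆ ≤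
          powOf (powOf (powOf (V k) p) p) p := by
        rw [hp2]; exact hconc
      exact hgoal
  have hPE : ∀ k, ⁅V k, (⊤ : Subgroup P)⁆ ≤ V (k + 1) := by
    by_cases hp2 : p = 2
    · intro k
      exact le_trans (hPE2 hp2 k) (hVle (k + 1))
    · intro k
      induction k with
      | zero =>
        have h := hpow
        unfold IsPowerful at h
        rwa [if_neg hp2] at h
      | succ k ih => exact core1_odd hp hp2 (Nat.card P) P rfl hP (V k) (hVnormal k) ih
  have hPOWMEM : ∀ k (x : P), x ^ (p ^ k) ∈ V k := by
    intro k
    induction k with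
    | zero => intro x; exact Subgroup.mem_top _
    | succ k ih =>
      intro x
      have h0 : x ^ (p ^ (k + 1)) = (x ^ (p ^ k)) ^ p := by rw [← pow_mul, pow_succ]
      rw [h0]
      exact pow_mem_powOf (ih x) p
  -- power map is a homomorphism mod two levels down
  have hPOWHOM : ∀ k (u w : P), u ∈ V k → w ∈ V k →
      (u ^ p * w ^ p)⁻¹ * (u * w) ^ p ∈ V (k + 2) := by
    intro k u w hu hw
    haveI := hVnormal (k + 2)
    set π := QuotientGroup.mk' (V (k + 2)) with hπdef
    suffices h : π ((u * w) ^ p) = π (u ^ p * w ^ p) by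
      have h1 : π ((u ^ p * w ^ p)⁻¹ * (u * w) ^ p) = 1 := by
        rw [map_mul, map_inv, h]
        group
      exact (QuotientGroup.eq_one_iff _).mp h1
    by_cases hp2 : p = 2
    · have hc : ⁅u, w⁆ ∈ V (k + 2) :=
        hPE2 hp2 k (Subgroup.commutator_mem_commutator hu (Subgroup.mem_top w))
      have hcq : Commute (π u) (π w) := by
        have h2 : π ⁅u, w⁆ = 1 := (QuotientGroup.eq_one_iff _).mpr hc
        rw [map_commutatorElement] at h2
        exact commutatorElement_eq_one_iff_commute.mp h2
      rw [map_pow, map_mul, hcq.mul_pow, map_mul, map_pow, map_pow]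
    · have hc1 : ⁅w, u⁆ ∈ V (k + 1) :=
        hPE k (Subgroup.commutator_mem_commutator hw (Subgroup.mem_top u))
      have hcent : ∀ z, Commute ⁅π w, π u⁆ z := by
        intro z
        obtain ⟨z', hz⟩ := QuotientGroup.mk'_surjective _ z
        rw [← hz]
        have h1 : ⁅⁅w, u⁆, z'⁆ ∈ V (k + 2) :=
          hPE (k + 1) (Subgroup.commutator_mem_commutator hc1 (Subgroup.mem_top z'))
        have h2 : π ⁅⁅w, u⁆, z'⁆ = 1 := (QuotientGroup.eq_one_iff _).mpr h1
        rw [map_commutatorElement, map_commutatorElement] at h2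
        exact commutatorElement_eq_one_iff_commute.mp h2
      have hcp : ⁅π w, π u⁆ ^ p = 1 := by
        have h1 : ⁅w, u⁆ ^ p ∈ V (k + 2) := pow_mem_powOf hc1 p
        have h2 : π (⁅w, u⁆ ^ p) = 1 := (QuotientGroup.eq_one_iff _).mpr h1
        rwa [map_pow, map_commutatorElement] at h2
      rw [map_pow, map_mul, cpow_odd hp hp2 (π u) (π w) hcent hcp, map_mul, map_pow, map_pow]
  -- main refinement lemma
  have hL : ∀ k, ∀ w, w ∈ V k → ∃ m : Fin d → ℤ,
      ((List.ofFn fun i => (xs i ^ (p ^ k)) ^ m i).prod)⁻¹ * w ∈ V (k + 1) := by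
    intro k
    induction k with
    | zero =>
      intro w _
      haveI := hVnormal 1
      set π := QuotientGroup.mk' (V 1) with hπdef
      have hbcent : ∀ (i : Fin d) (z : P ⧸ V 1), Commute (π (xs i ^ p ^ 0)) z := by
        intro i z
        obtain ⟨z', hz⟩ := QuotientGroup.mk'_surjective _ z
        rw [← hz]
        have h1 : ⁅xs i ^ p ^ 0, z'⁆ ∈ V 1 :=
          hPE 0 (Subgroup.commutator_mem_commutator (hPOWMEM 0 (xs i)) (Subgroup.mem_top z'))
        have h2 : π ⁅xs i ^ p ^ 0, z'⁆ = 1 := (QuotientGroup.eq_one_iff _).mpr h1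
        rw [map_commutatorElement] at h2
        exact commutatorElement_eq_one_iff_commute.mp h2
      have hwT : π w ∈ zprodSubgroup (fun i => π (xs i ^ p ^ 0)) hbcent := by
        have hmem : π w ∈ Subgroup.map π (Subgroup.closure (Set.range xs)) := by
          rw [hgen]
          exact Subgroup.mem_map_of_mem π (Subgroup.mem_top w)
        rw [MonoidHom.map_closure] at hmem
        have hsub : (⇑π '' Set.range xs) ⊆
            ((zprodSubgroup (fun i => π (xs i ^ p ^ 0)) hbcent : Subgroup (P ⧸ V 1)) : Set _) := by
          rintro q ⟨x, ⟨i, rfl⟩, rfl⟩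
          refine ⟨fun j => if j = i then 1 else 0, ?_⟩
          rw [prod_single (fun i => π (xs i ^ p ^ 0)) i]
          simp
        exact (Subgroup.closure_le _).mpr hsub hmem
      obtain ⟨m, hmeq⟩ := hwT
      refine ⟨m, ?_⟩
      have hfin : π (((List.ofFn fun i => (xs i ^ p ^ 0) ^ m i).prod)⁻¹ * w) = 1 := by
        rw [map_mul, map_inv]
        have hprod : π ((List.ofFn fun i => (xs i ^ p ^ 0) ^ m i).prod)
            = (List.ofFn fun i => π (xs i ^ p ^ 0) ^ m i).prod := by
          rw [map_ofFn_prod π]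
          have hfe : (fun i => π ((xs i ^ p ^ 0) ^ m i)) =
              fun i => π (xs i ^ p ^ 0) ^ m i := by
            funext i
            exact map_zpow π _ _
          rw [hfe]
        rw [hprod, ← hmeq]
        group
      exact (QuotientGroup.eq_one_iff _).mp hfin
    | succ k ihL =>
      intro w hw
      haveI := hVnormal (k + 2)
      set π := QuotientGroup.mk' (V (k + 2)) with hπdef
      have hbcent : ∀ (i : Fin d) (z : P ⧸ V (k + 2)), Commute (π (xs i ^ p ^ (k + 1))) z := by
        intro i z
        obtain ⟨z', hz⟩ := QuotientGroup.mk'_surjective _ z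
        rw [← hz]
        have h1 : ⁅xs i ^ p ^ (k + 1), z'⁆ ∈ V (k + 2) :=
          hPE (k + 1)
            (Subgroup.commutator_mem_commutator (hPOWMEM (k + 1) (xs i)) (Subgroup.mem_top z'))
        have h2 : π ⁅xs i ^ p ^ (k + 1), z'⁆ = 1 := (QuotientGroup.eq_one_iff _).mpr h1
        rw [map_commutatorElement] at h2
        exact commutatorElement_eq_one_iff_commute.mp h2
      have hwT : π w ∈ zprodSubgroup (fun i => π (xs i ^ p ^ (k + 1))) hbcent := by
        have hmem : π w ∈ Subgroup.map π (V (k + 1)) := Subgroup.mem_map_of_mem π hw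
        have hVk1 : Subgroup.map π (V (k + 1)) =
            Subgroup.closure (⇑π '' ((fun x => x ^ p) '' ((V k : Set P)))) := by
          show Subgroup.map π (Subgroup.closure _) = _
          rw [MonoidHom.map_closure]
        rw [hVk1] at hmem
        have hsub : (⇑π '' ((fun x => x ^ p) '' ((V k : Set P)))) ⊆
            ((zprodSubgroup (fun i => π (xs i ^ p ^ (k + 1))) hbcent :
              Subgroup (P ⧸ V (k + 2))) : Set _) := by
          rintro q ⟨-, ⟨u, hu, rfl⟩, rfl⟩
          obtain ⟨m, hm⟩ := ihL u hu
          set X := (List.ofFn fun i => (xs i ^ p ^ k) ^ m i).prod with hXdef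
          have hXmem : ∀ i, (xs i ^ p ^ k) ^ m i ∈ V k := fun i =>
            Subgroup.zpow_mem _ (hPOWMEM k (xs i)) (m i)
          have hXV : X ∈ V k := by
            apply Subgroup.list_prod_mem
            intro x hx
            rw [List.mem_ofFn] at hx
            obtain ⟨j, rfl⟩ := hx
            exact hXmem j
          have hvV : X⁻¹ * u ∈ V (k + 1) := hm
          have hu_eq : u = X * (X⁻¹ * u) := by group
          have hvcent : ∀ z : P ⧸ V (k + 2), Commute (π (X⁻¹ * u)) z := by
            intro z
            obtain ⟨z', hz⟩ := QuotientGroup.mk'_surjective _ z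
            rw [← hz]
            have h1 : ⁅X⁻¹ * u, z'⁆ ∈ V (k + 2) :=
              hPE (k + 1) (Subgroup.commutator_mem_commutator hvV (Subgroup.mem_top z'))
            have h2 : π ⁅X⁻¹ * u, z'⁆ = 1 := (QuotientGroup.eq_one_iff _).mpr h1
            rw [map_commutatorElement] at h2
            exact commutatorElement_eq_one_iff_commute.mp h2
          have hvp : π ((X⁻¹ * u) ^ p) = 1 :=
            (QuotientGroup.eq_one_iff _).mpr (pow_mem_powOf hvV p)
          have hstep : π (u ^ p) = π (X ^ p) := by
            conv_lhs => rw [hu_eq]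
            rw [map_pow, map_mul, (Commute.mul_pow ((hvcent (π X)).symm) p),
              ← map_pow, ← map_pow, hvp, mul_one]
          have hhom : ∀ u' w', u' ∈ V k → w' ∈ V k →
              π ((u' * w') ^ p) = π (u' ^ p) * π (w' ^ p) := by
            intro u' w' hu' hw'
            have h0 := hPOWHOM k u' w' hu' hw'
            have h1 : π ((u' ^ p * w' ^ p)⁻¹ * (u' * w') ^ p) = 1 :=
              (QuotientGroup.eq_one_iff _).mpr h0
            rw [map_mul, map_inv, inv_mul_eq_one] at h1
            rw [← h1, map_mul]
          have hXp := list_pow_hom π (V k) p hhom (fun i => (xs i ^ p ^ k) ^ m i) hXmem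
          have hentry : ∀ i : Fin d, ((xs i ^ p ^ k) ^ m i) ^ p = (xs i ^ p ^ (k + 1)) ^ m i := by
            intro i
            have hbase : xs i ^ p ^ (k + 1) = (xs i ^ p ^ k) ^ p := by
              rw [← pow_mul, pow_succ]
            rw [hbase, ← zpow_natCast ((xs i ^ p ^ k) ^ m i) p, ← zpow_mul,
              ← zpow_natCast (xs i ^ p ^ k) p, ← zpow_mul, mul_comm]
          refine ⟨m, ?_⟩
          rw [← hXdef] at hXp
          show π (u ^ p) = (List.ofFn fun i => π (xs i ^ p ^ (k + 1)) ^ m i).prod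
          rw [hstep, hXp]
          have hfe : (fun i => π (((xs i ^ p ^ k) ^ m i) ^ p)) =
              fun i => π (xs i ^ p ^ (k + 1)) ^ m i := by
            funext i
            rw [hentry i]
            exact map_zpow π _ _
          rw [hfe]
        exact (Subgroup.closure_le _).mpr hsub hmem
      obtain ⟨m, hmeq⟩ := hwT
      refine ⟨m, ?_⟩
      have hfin : π (((List.ofFn fun i => (xs i ^ p ^ (k + 1)) ^ m i).prod)⁻¹ * w) = 1 := by
        rw [map_mul, map_inv]
        have hprod : π ((List.ofFn fun i => (xs i ^ p ^ (k + 1)) ^ m i).prod)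
            = (List.ofFn fun i => π (xs i ^ p ^ (k + 1)) ^ m i).prod := by
          rw [map_ofFn_prod π]
          have hfe : (fun i => π ((xs i ^ p ^ (k + 1)) ^ m i)) =
              fun i => π (xs i ^ p ^ (k + 1)) ^ m i := by
            funext i
            exact map_zpow π _ _
          rw [hfe]
        rw [hprod, ← hmeq]
        group
      exact (QuotientGroup.eq_one_iff _).mp hfin
  -- approximation of arbitrary elements
  have hC : ∀ k (g : P), ∃ nn : Fin d → ℤ,
      ((List.ofFn fun i => xs i ^ nn i).prod)⁻¹ * g ∈ V k := by
    intro k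
    induction k with
    | zero => intro g; exact ⟨0, Subgroup.mem_top _⟩
    | succ k ihC =>
      intro g
      obtain ⟨nn, hn⟩ := ihC g
      set X := (List.ofFn fun i => xs i ^ nn i).prod with hXdef
      obtain ⟨m, hm⟩ := hL k (X⁻¹ * g) hn
      set Y := (List.ofFn fun i => (xs i ^ p ^ k) ^ m i).prod with hYdef
      refine ⟨fun i => nn i + (p ^ k : ℕ) * m i, ?_⟩
      set Z := (List.ofFn fun i => xs i ^ (nn i + (p ^ k : ℕ) * m i)).prod with hZdef
      haveI := hVnormal (k + 1)
      set π := QuotientGroup.mk' (V (k + 1)) with hπdef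
      have hYcent : ∀ (i : Fin d) (z : P ⧸ V (k + 1)),
          Commute (π ((xs i ^ p ^ k) ^ m i)) z := by
        intro i z
        obtain ⟨z', hz⟩ := QuotientGroup.mk'_surjective _ z
        rw [← hz]
        have hmem : (xs i ^ p ^ k) ^ m i ∈ V k := Subgroup.zpow_mem _ (hPOWMEM k (xs i)) (m i)
        have h1 : ⁅(xs i ^ p ^ k) ^ m i, z'⁆ ∈ V (k + 1) :=
          hPE k (Subgroup.commutator_mem_commutator hmem (Subgroup.mem_top z'))
        have h2 : π ⁅(xs i ^ p ^ k) ^ m i, z'⁆ = 1 := (QuotientGroup.eq_one_iff _).mpr h1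
        rw [map_commutatorElement] at h2
        exact commutatorElement_eq_one_iff_commute.mp h2
      have hZXY : π Z = π X * π Y := by
        rw [hZdef, hXdef, hYdef, map_ofFn_prod π, map_ofFn_prod π, map_ofFn_prod π,
          prod_mul_prod_central (fun i => π (xs i ^ nn i))
            (fun i => π ((xs i ^ p ^ k) ^ m i)) hYcent]
        have hfe : (fun i => π (xs i ^ (nn i + (p ^ k : ℕ) * m i))) =
            fun i => π (xs i ^ nn i) * π ((xs i ^ p ^ k) ^ m i) := by
          funext i
          rw [← map_mul]
          congr 1
          rw [← zpow_natCast (xs i) (p ^ k), ← zpow_mul, ← zpow_add]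
        rw [hfe]
      have hfin : π (Z⁻¹ * g) = 1 := by
        have hgXY : π g = π X * π Y * π (Y⁻¹ * (X⁻¹ * g)) := by
          rw [← map_mul, ← map_mul]
          congr 1
          group
        have h1 : π (Y⁻¹ * (X⁻¹ * g)) = 1 := (QuotientGroup.eq_one_iff _).mpr hm
        rw [map_mul, map_inv, hZXY, hgXY, h1, mul_one]
        group
      exact (QuotientGroup.eq_one_iff _).mp hfin
  -- termination of the chain
  have hterm : ∃ K, V K = ⊥ := by
    have hstep : ∀ k, V k ≠ ⊥ → Nat.card (V (k + 1)) < Nat.card (V k) := by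
      intro k hk
      have hne : V (k + 1) ≠ V k := by
        intro heq
        exact hk (eq_bot_of_le_powOf hp hP (V k) (le_of_eq heq.symm))
      have hlt : V (k + 1) < V k := lt_of_le_of_ne (hVle k) hne
      have hss : ((V (k + 1) : Subgroup P) : Set P) ⊂ ((V k : Subgroup P) : Set P) := by
        rw [Set.ssubset_iff_of_subset (by exact_mod_cast hVle k)]
        obtain ⟨x, hxk, hxk1⟩ := SetLike.exists_of_lt hlt
        exact ⟨x, hxk, hxk1⟩
      have := Set.Finite.card_lt_card (Set.toFinite _) hss
      simpa using this
    have hdesc : ∀ n k, Nat.card (V k) ≤ n → ∃ K, V K = ⊥ := by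
      intro n
      induction n with
      | zero =>
        intro k hk
        exfalso
        have : 0 < Nat.card (V k) := Nat.card_pos
        omega
      | succ n ihn =>
        intro k hk
        by_cases hbot : V k = ⊥
        · exact ⟨k, hbot⟩
        · exact ihn (k + 1) (by have := hstep k hbot; omega)
    exact hdesc (Nat.card (V 0)) 0 le_rfl
  obtain ⟨K, hK⟩ := hterm
  have hprodall : ∀ g : P, ∃ kk : Fin d → ℤ,
      g = ((List.finRange d).map (fun i => xs i ^ kk i)).prod := by
    intro g
    obtain ⟨nn, hn⟩ := hC K g
    rw [hK, Subgroup.mem_bot] at hn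
    refine ⟨nn, ?_⟩
    rw [← List.ofFn_eq_map]
    exact (inv_mul_eq_one.mp hn).symm
  refine ⟨⟨xs, hprodall⟩, ?_⟩
  intro e he hexp
  have hzpow : ∀ (x : P) (z : ℤ), x ^ z = x ^ ((z % (e : ℤ)).toNat : ℕ) := by
    intro x z
    have hx : x ^ ((e : ℤ)) = 1 := by rw [zpow_natCast, hexp]
    calc x ^ z = x ^ ((e : ℤ) * (z / (e : ℤ)) + z % (e : ℤ)) := by
          rw [Int.mul_ediv_add_emod z (e : ℤ)]
      _ = (x ^ ((e : ℤ))) ^ (z / (e : ℤ)) * x ^ (z % (e : ℤ)) := by rw [zpow_add, zpow_mul]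
      _ = x ^ (z % (e : ℤ)) := by rw [hx, one_zpow, one_mul]
      _ = x ^ ((z % (e : ℤ)).toNat : ℕ) := by
          rw [← zpow_natCast x ((z % (e : ℤ)).toNat),
            Int.toNat_of_nonneg (Int.emod_nonneg z (by exact_mod_cast he.ne'))]
  have hsurj : Function.Surjective
      (fun t : Fin d → Fin e => ((List.finRange d).map (fun i => xs i ^ ((t i : ℕ)))).prod) := by
    intro g
    obtain ⟨kk, hkk⟩ := hprodall g
    have hbound : ∀ i : Fin d, ((kk i % (e : ℤ)).toNat) < e := by
      intro i
      have h1 := Int.emod_nonneg (kk i) (by exact_mod_cast he.ne' : (e : ℤ) ≠ 0)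
      have h2 := Int.emod_lt_of_pos (kk i) (by exact_mod_cast he : (0 : ℤ) < (e : ℤ))
      omega
    refine ⟨fun i => ⟨(kk i % (e : ℤ)).toNat, hbound i⟩, ?_⟩
    show ((List.finRange d).map (fun i => xs i ^ (((kk i % (e : ℤ)).toNat : ℕ)))).prod = g
    rw [hkk]
    have hfe : (fun i : Fin d => xs i ^ (((kk i % (e : ℤ)).toNat : ℕ))) =
        fun i => xs i ^ kk i := by
      funext i
      exact (hzpow (xs i) (kk i)).symm
    rw [hfe]
  have hcard := Nat.card_le_card_of_surjective _ hsurj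
  calc Nat.card P ≤ Nat.card (Fin d → Fin e) := hcard
    _ = e ^ d := by
        rw [Nat.card_eq_fintype_card, Fintype.card_fun, Fintype.card_fin, Fintype.card_fin]
end

section
/- Let G be a group with an N-series G = G₁ ≥ G₂ ≥ ⋯ (meaning [G_i, G_j] ≤ G_{i+j} for all i, j). Then the direct sum L = ⊕ G_i/G_{i+1}, with bracket induced by [xG_{i+1}, yG_{j+1}] = [x,y]G_{i+j+1} on homogeneous components, is a well-defined Lie ring. -/
open scoped commutatorElement

/-- A witness that the direct sum `⊕ G_i/G_{i+1}` associated to an `N`-series `(Gs i)`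
carries a well-defined Lie ring structure: a Lie ring `L` together with group
homomorphisms `φ i : G_i →* L` (written multiplicatively) whose kernel is exactly
`G_{i+1}`, whose homogeneous components generate `L` additively and independently
(direct sum), and whose bracket is induced by group commutation. -/
structure AssociatedLieRing (G : Type) [Group G] (Gs : ℕ → Subgroup G)
    (hcomm : ∀ i j, 1 ≤ i → 1 ≤ j → ∀ x ∈ Gs i, ∀ y ∈ Gs j, ⁅x, y⁆ ∈ Gs (i + j)) where
  L : Type
  [instL : LieRing L]
  φ : (i : ℕ) → ↥(Gs i) →* Multiplicative L
  ker_eq : ∀ i, 1 ≤ i → ∀ x : ↥(Gs i), φ i x = 1 ↔ (x : G) ∈ Gs (i + 1)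
  bracket_eq : ∀ i j (hi : 1 ≤ i) (hj : 1 ≤ j) (x : ↥(Gs i)) (y : ↥(Gs j)),
    Multiplicative.toAdd (φ (i + j) ⟨⁅(x : G), (y : G)⁆, hcomm i j hi hj x x.2 y y.2⟩) =
      ⁅Multiplicative.toAdd (φ i x), Multiplicative.toAdd (φ j y)⁆
  generates : AddSubgroup.closure
      (⋃ i ∈ {i : ℕ | 1 ≤ i},
        Set.range fun x : ↥(Gs i) => Multiplicative.toAdd (φ i x)) = ⊤
  indep : iSupIndep fun i : {i : ℕ // 1 ≤ i} =>
      AddSubgroup.closure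
        (Set.range fun x : ↥(Gs (i : ℕ)) => Multiplicative.toAdd (φ i x))




section JacAux
variable {H : Type*} [Group H]

/-- conjugation simplification from a vanishing commutator -/
lemma conj_eq_of_comm_one {a b : H} (h : ⁅a, b⁆ = 1) : a * b * a⁻¹ = b := by
  have := (commutatorElement_eq_one_iff_commute.mp h).eq
  rw [this, mul_inv_cancel_right]

lemma jacobi_aux (X Y Z : H)
    (centI : ∀ w, Commute ⁅⁅X, Y⁆, Z⁆ w)
    (centJ : ∀ w, Commute ⁅Y, ⁅X, Z⁆⁆ w)
    (v1 : ⁅⁅X, Z⁆, ⁅Y, Z⁆⁆ = 1)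
    (v2 : ⁅⁅X, Y⁆, ⁅X, Z⁆⁆ = 1)
    (v3 : ⁅⁅X, Y⁆, ⁅Y, Z⁆⁆ = 1) :
    ⁅X, ⁅Y, Z⁆⁆ = ⁅⁅X, Y⁆, Z⁆ * ⁅Y, ⁅X, Z⁆⁆ := by
  have hU : X * Y * X⁻¹ = ⁅X, Y⁆ * Y := by group
  have hV : X * Z * X⁻¹ = ⁅X, Z⁆ * Z := by group
  have e2 : ⁅Y, ⁅X, Z⁆ * Z⁆ = ⁅Y, ⁅X, Z⁆⁆ * ⁅Y, Z⁆ := by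
    have : ⁅Y, ⁅X, Z⁆ * Z⁆ = ⁅Y, ⁅X, Z⁆⁆ * (⁅X, Z⁆ * ⁅Y, Z⁆ * ⁅X, Z⁆⁻¹) := by group
    rw [this, conj_eq_of_comm_one v1]
  have e3 : ⁅⁅X, Y⁆, ⁅X, Z⁆ * Z⁆ = ⁅⁅X, Y⁆, Z⁆ := by
    have h : ⁅⁅X, Y⁆, ⁅X, Z⁆ * Z⁆
        = ⁅⁅X, Y⁆, ⁅X, Z⁆⁆ * (⁅X, Z⁆ * ⁅⁅X, Y⁆, Z⁆ * ⁅X, Z⁆⁻¹) := by group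
    have hc : ⁅X, Z⁆ * ⁅⁅X, Y⁆, Z⁆ * ⁅X, Z⁆⁻¹ = ⁅⁅X, Y⁆, Z⁆ := by
      rw [(centI ⁅X, Z⁆).symm.eq, mul_inv_cancel_right]
    rw [h, v2, one_mul, hc]
  calc ⁅X, ⁅Y, Z⁆⁆
      = ⁅X * Y * X⁻¹, X * Z * X⁻¹⁆ * ⁅Y, Z⁆⁻¹ := by group
    _ = ⁅⁅X, Y⁆ * Y, ⁅X, Z⁆ * Z⁆ * ⁅Y, Z⁆⁻¹ := by rw [hU, hV]
    _ = (⁅X, Y⁆ * ⁅Y, ⁅X, Z⁆ * Z⁆ * ⁅X, Y⁆⁻¹ * ⁅⁅X, Y⁆, ⁅X, Z⁆ * Z⁆) * ⁅Y, Z⁆⁻¹ := by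
        group
    _ = (⁅X, Y⁆ * (⁅Y, ⁅X, Z⁆⁆ * ⁅Y, Z⁆) * ⁅X, Y⁆⁻¹ * ⁅⁅X, Y⁆, Z⁆) * ⁅Y, Z⁆⁻¹ := by
        rw [e2, e3]
    _ = ⁅Y, ⁅X, Z⁆⁆ * ((⁅X, Y⁆ * ⁅Y, Z⁆ * ⁅X, Y⁆⁻¹) * ⁅⁅X, Y⁆, Z⁆ * ⁅Y, Z⁆⁻¹) := by
        rw [← mul_assoc ⁅X, Y⁆ ⁅Y, ⁅X, Z⁆⁆, (centJ ⁅X, Y⁆).symm.eq]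
        group
    _ = ⁅Y, ⁅X, Z⁆⁆ * (⁅Y, Z⁆ * ⁅⁅X, Y⁆, Z⁆ * ⁅Y, Z⁆⁻¹) := by
        rw [conj_eq_of_comm_one v3]
    _ = ⁅Y, ⁅X, Z⁆⁆ * ⁅⁅X, Y⁆, Z⁆ := by
        rw [(centI ⁅Y, Z⁆).symm.eq, mul_inv_cancel_right]
    _ = ⁅⁅X, Y⁆, Z⁆ * ⁅Y, ⁅X, Z⁆⁆ := (centI ⁅Y, ⁅X, Z⁆⁆).eq.symm

end JacAux

namespace AssocLieAux

structure NS (G : Type) [Group G] where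
  Gs : ℕ → Subgroup G
  h1 : Gs 1 = ⊤
  hdesc : ∀ i, 1 ≤ i → Gs (i + 1) ≤ Gs i
  hcomm : ∀ i j, 1 ≤ i → 1 ≤ j → ∀ x ∈ Gs i, ∀ y ∈ Gs j, ⁅x, y⁆ ∈ Gs (i + j)

open scoped DirectSum

namespace NS

variable {G : Type} [Group G] (S : NS G)


lemma mem_one (g : G) : g ∈ S.Gs 1 := by rw [S.h1]; trivial

lemma antitone {l m : ℕ} (hl : 1 ≤ l) (hlm : l ≤ m) : S.Gs m ≤ S.Gs l := by
  induction m, hlm using Nat.le_induction with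
  | base => exact le_rfl
  | succ n hn ih => exact le_trans (S.hdesc n (le_trans hl hn)) ih

lemma normal {m : ℕ} (hm : 1 ≤ m) : (S.Gs m).Normal := by
  constructor
  intro a ha g
  have h := S.hcomm 1 m le_rfl hm g (S.mem_one g) a ha
  have e : g * a * g⁻¹ = ⁅g, a⁆ * a := by group
  rw [e]
  exact mul_mem (S.antitone hm (by omega) h) ha

instance normal_succ (n : ℕ) : (S.Gs (n + 1)).Normal := S.normal (by omega)

lemma mem_comm {i j : ℕ} {x y : G} (hx : x ∈ S.Gs i) (hy : y ∈ S.Gs j) :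
    ⁅x, y⁆ ∈ S.Gs (i + j) := by
  rcases Nat.eq_zero_or_pos i with hi | hi
  · subst hi
    rcases Nat.eq_zero_or_pos j with hj | hj
    · subst hj
      simpa [commutatorElement_def] using
        mul_mem (mul_mem (mul_mem hx hy) (inv_mem hx)) (inv_mem hy)
    · have e : ⁅x, y⁆ = (x * y * x⁻¹) * y⁻¹ := by group
      have : ⁅x, y⁆ ∈ S.Gs j := by
        rw [e]; exact mul_mem ((S.normal hj).conj_mem y hy x) (inv_mem hy)
      simpa using this
  · rcases Nat.eq_zero_or_pos j with hj | hj
    · subst hj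
      have e : ⁅x, y⁆ = x * (y * x⁻¹ * y⁻¹) := by group
      rw [e]
      exact mul_mem hx ((S.normal hi).conj_mem x⁻¹ (inv_mem hx) y)
    · exact S.hcomm i j hi hj x hx y hy

lemma comm_succ {n : ℕ} {x : G} (hx : x ∈ S.Gs n) (g : G) : ⁅g, x⁆ ∈ S.Gs (n + 1) := by
  have := S.mem_comm (S.mem_one g) hx
  rwa [Nat.add_comm] at this

lemma comm_succ' {n : ℕ} {x : G} (hx : x ∈ S.Gs n) (g : G) : ⁅x, g⁆ ∈ S.Gs (n + 1) := by
  rw [← commutatorElement_inv]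
  exact inv_mem (S.comm_succ hx g)

lemma central {n : ℕ} {a : G} (ha : a ∈ S.Gs n) (w : G ⧸ S.Gs (n + 1)) :
    Commute (QuotientGroup.mk a : G ⧸ S.Gs (n + 1)) w := by
  obtain ⟨g, rfl⟩ := QuotientGroup.mk_surjective w
  rw [← commutatorElement_eq_one_iff_commute]
  have h : ((⁅a, g⁆ : G) : G ⧸ S.Gs (n + 1)) = 1 :=
    (QuotientGroup.eq_one_iff _).mpr (S.comm_succ' ha g)
  calc ⁅(QuotientGroup.mk a : G ⧸ S.Gs (n+1)), QuotientGroup.mk g⁆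
      = ((⁅a, g⁆ : G) : G ⧸ S.Gs (n + 1)) := by
        simp [commutatorElement_def]
    _ = 1 := h

lemma vanish {n m : ℕ} {a : G} (ha : a ∈ S.Gs m) (hmn : n + 1 ≤ m) :
    ((a : G) : G ⧸ S.Gs (n + 1)) = 1 :=
  (QuotientGroup.eq_one_iff _).mpr (S.antitone (by omega) hmn ha)



lemma mk_comm_mul {n : ℕ} (a b : G) :
    ((⁅a, b⁆ : G) : G ⧸ S.Gs (n + 1)) = ⁅(a : G ⧸ S.Gs (n + 1)), (b : G ⧸ S.Gs (n + 1))⁆ := by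
  simp [commutatorElement_def]

lemma add_left_congr {i j : ℕ} {x₁ x₂ y : G} (hx₂ : x₂ ∈ S.Gs i) (hy : y ∈ S.Gs j) :
    ⁅x₁ * x₂, y⁆⁻¹ * (⁅x₂, y⁆ * ⁅x₁, y⁆) ∈ S.Gs (i + j + 1) := by
  have key : ((⁅x₁ * x₂, y⁆ : G) : G ⧸ S.Gs (i + j + 1))
      = ((⁅x₂, y⁆ * ⁅x₁, y⁆ : G) : G ⧸ S.Gs (i + j + 1)) := by
    have e : ⁅x₁ * x₂, y⁆ = ⁅x₁, ⁅x₂, y⁆⁆ * (⁅x₂, y⁆ * ⁅x₁, y⁆) := by group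
    rw [e, QuotientGroup.mk_mul,
      S.vanish (S.comm_succ (S.mem_comm hx₂ hy) x₁) le_rfl, one_mul]
  exact QuotientGroup.eq.mp key

lemma add_right_congr {i j : ℕ} {x y₁ y₂ : G} (hx : x ∈ S.Gs i) (hy₂ : y₂ ∈ S.Gs j) :
    ⁅x, y₁ * y₂⁆⁻¹ * (⁅x, y₁⁆ * ⁅x, y₂⁆) ∈ S.Gs (i + j + 1) := by
  have key : ((⁅x, y₁ * y₂⁆ : G) : G ⧸ S.Gs (i + j + 1))
      = ((⁅x, y₁⁆ * ⁅x, y₂⁆ : G) : G ⧸ S.Gs (i + j + 1)) := by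
    have e : ⁅x, y₁ * y₂⁆ = ⁅x, y₁⁆ * (⁅y₁, ⁅x, y₂⁆⁆ * ⁅x, y₂⁆) := by group
    rw [e, QuotientGroup.mk_mul, QuotientGroup.mk_mul, QuotientGroup.mk_mul,
      S.vanish (S.comm_succ (S.mem_comm hx hy₂) y₁) le_rfl, one_mul]
  exact QuotientGroup.eq.mp key

lemma ker_left {i j : ℕ} {x y : G} (hx : x ∈ S.Gs (i + 1)) (hy : y ∈ S.Gs j) :
    ⁅x, y⁆ ∈ S.Gs (i + j + 1) := by
  have := S.mem_comm hx hy
  rwa [show i + 1 + j = i + j + 1 by omega] at this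

lemma ker_right {i j : ℕ} {x y : G} (hx : x ∈ S.Gs i) (hy : y ∈ S.Gs (j + 1)) :
    ⁅x, y⁆ ∈ S.Gs (i + j + 1) := by
  have := S.mem_comm hx hy
  rwa [show i + (j + 1) = i + j + 1 by omega] at this

lemma jacobi_congr {i j k : ℕ} (hi : 1 ≤ i) (hj : 1 ≤ j) (hk : 1 ≤ k)
    {x y z : G} (hx : x ∈ S.Gs i) (hy : y ∈ S.Gs j) (hz : z ∈ S.Gs k) :
    ⁅x, ⁅y, z⁆⁆⁻¹ * (⁅⁅x, y⁆, z⁆ * ⁅y, ⁅x, z⁆⁆) ∈ S.Gs (i + j + k + 1) := by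
  set n := i + j + k with hn
  apply QuotientGroup.eq.mp
  set X : G ⧸ S.Gs (n + 1) := ((x : G) : G ⧸ S.Gs (n + 1)) with hX
  set Y : G ⧸ S.Gs (n + 1) := ((y : G) : G ⧸ S.Gs (n + 1)) with hY
  set Z : G ⧸ S.Gs (n + 1) := ((z : G) : G ⧸ S.Gs (n + 1)) with hZ
  have centI : ∀ w, Commute ⁅⁅X, Y⁆, Z⁆ w := by
    intro w
    rw [hX, hY, hZ, ← S.mk_comm_mul, ← S.mk_comm_mul]
    exact S.central (S.mem_comm (S.mem_comm hx hy) hz) w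
  have centJ : ∀ w, Commute ⁅Y, ⁅X, Z⁆⁆ w := by
    intro w
    rw [hX, hY, hZ, ← S.mk_comm_mul, ← S.mk_comm_mul]
    have h : ⁅y, ⁅x, z⁆⁆ ∈ S.Gs n := by
      have := S.mem_comm hy (S.mem_comm hx hz)
      rwa [show j + (i + k) = n by omega] at this
    exact S.central h w
  have v1 : ⁅⁅X, Z⁆, ⁅Y, Z⁆⁆ = 1 := by
    rw [hX, hY, hZ, ← S.mk_comm_mul, ← S.mk_comm_mul, ← S.mk_comm_mul]
    exact S.vanish (S.mem_comm (S.mem_comm hx hz) (S.mem_comm hy hz)) (by omega)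
  have v2 : ⁅⁅X, Y⁆, ⁅X, Z⁆⁆ = 1 := by
    rw [hX, hY, hZ, ← S.mk_comm_mul, ← S.mk_comm_mul, ← S.mk_comm_mul]
    exact S.vanish (S.mem_comm (S.mem_comm hx hy) (S.mem_comm hx hz)) (by omega)
  have v3 : ⁅⁅X, Y⁆, ⁅Y, Z⁆⁆ = 1 := by
    rw [hX, hY, hZ, ← S.mk_comm_mul, ← S.mk_comm_mul, ← S.mk_comm_mul]
    exact S.vanish (S.mem_comm (S.mem_comm hx hy) (S.mem_comm hy hz)) (by omega)
  have main := jacobi_aux X Y Z centI centJ v1 v2 v3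
  rw [hX, hY, hZ] at main
  simp only [S.mk_comm_mul, QuotientGroup.mk_mul]
  exact main



/-- `G_{i+1}` viewed inside `G_i`. -/
abbrev K (i : ℕ) : Subgroup (S.Gs i) := (S.Gs (i + 1)).subgroupOf (S.Gs i)

instance (i : ℕ) : (S.K i).Normal := by
  constructor
  intro a ha g
  rw [Subgroup.mem_subgroupOf] at ha ⊢
  simpa using (S.normal_succ i).conj_mem _ ha (g : G)

/-- The `i`-th graded component, multiplicatively. -/
abbrev Qm (i : ℕ) : Type := S.Gs i ⧸ S.K i

/-- The `i`-th graded component, additively. -/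
abbrev Q (i : ℕ) : Type := Additive (S.Qm i)

lemma sq_mem {i : ℕ} {g : G} (hg : g ∈ S.Gs (i + i)) : g ∈ S.Gs (i + 1) := by
  rcases Nat.eq_zero_or_pos i with h | h
  · subst h; exact S.mem_one g
  · exact S.antitone (by omega) (by omega) hg

lemma qm_comm {i : ℕ} (a b : S.Qm i) : a * b = b * a := by
  induction a using QuotientGroup.induction_on with | _ x =>
  induction b using QuotientGroup.induction_on with | _ y =>
  rw [← QuotientGroup.mk_mul, ← QuotientGroup.mk_mul]
  apply QuotientGroup.eq.mpr
  rw [Subgroup.mem_subgroupOf]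
  have e : (((x * y)⁻¹ * (y * x) : S.Gs i) : G) = ⁅(y : G)⁻¹, (x : G)⁻¹⁆ := by
    push_cast; group
  rw [e]
  exact S.sq_mem (S.mem_comm (inv_mem y.2) (inv_mem x.2))

instance (i : ℕ) : AddCommGroup (S.Q i) :=
  { (inferInstance : AddGroup (S.Q i)) with
    add_comm := fun a b => S.qm_comm a.toMul b.toMul }

/-- The underlying additive group of the graded Lie ring. -/
abbrev L : Type := ⨁ i, S.Q i

def mkQ (n : ℕ) (g : G) (hg : g ∈ S.Gs n) : S.Q n :=
  Additive.ofMul (QuotientGroup.mk (⟨g, hg⟩ : S.Gs n) : S.Qm n)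

lemma mkQ_mul {n : ℕ} {g h : G} (hg : g ∈ S.Gs n) (hh : h ∈ S.Gs n) :
    S.mkQ n (g * h) (mul_mem hg hh) = S.mkQ n g hg + S.mkQ n h hh := rfl

lemma mkQ_congr {n : ℕ} {g g' : G} (hg : g ∈ S.Gs n) (hg' : g' ∈ S.Gs n)
    (h : g⁻¹ * g' ∈ S.Gs (n + 1)) : S.mkQ n g hg = S.mkQ n g' hg' := by
  unfold mkQ
  apply congrArg
  apply QuotientGroup.eq.mpr
  rw [Subgroup.mem_subgroupOf]
  exact h

lemma mkQ_surjective (n : ℕ) (a : S.Q n) : ∃ g, ∃ hg : g ∈ S.Gs n, a = S.mkQ n g hg := by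
  obtain ⟨x, hx⟩ := QuotientGroup.mk_surjective (Additive.toMul a)
  exact ⟨x, x.2, by rw [mkQ]; rw [show (⟨(x : G), x.2⟩ : S.Gs n) = x from rfl, hx]; rfl⟩

lemma q0_eq_zero (a : S.Q 0) : a = 0 := by
  obtain ⟨g, hg, rfl⟩ := S.mkQ_surjective 0 a
  have : S.mkQ 0 g hg = S.mkQ 0 1 (one_mem _) :=
    S.mkQ_congr _ _ (by simpa using S.mem_one g⁻¹)
  rw [this]; rfl

/-- commutator map into the quotient, as a function of the second variable. -/
def cHomRaw (i j : ℕ) (x : S.Gs i) : S.Gs j →* S.Qm (i + j) where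
  toFun y := QuotientGroup.mk ⟨⁅(x : G), (y : G)⁆, S.mem_comm x.2 y.2⟩
  map_one' := by
    apply (QuotientGroup.eq_one_iff _).mpr
    rw [Subgroup.mem_subgroupOf]
    simpa using one_mem _
  map_mul' y₁ y₂ := by
    rw [← QuotientGroup.mk_mul]
    apply QuotientGroup.eq.mpr
    rw [Subgroup.mem_subgroupOf]
    push_cast
    exact S.add_right_congr x.2 y₂.2

lemma cHomRaw_ker (i j : ℕ) (x : S.Gs i) {y : S.Gs j} (hy : y ∈ S.K j) :
    S.cHomRaw i j x y = 1 := by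
  apply (QuotientGroup.eq_one_iff _).mpr
  rw [Subgroup.mem_subgroupOf] at hy ⊢
  exact S.ker_right x.2 hy

def cMid (i j : ℕ) (x : S.Gs i) : S.Qm j →* S.Qm (i + j) :=
  QuotientGroup.lift (S.K j) (S.cHomRaw i j x) (fun _ h => S.cHomRaw_ker i j x h)

lemma cMid_mk (i j : ℕ) (x : S.Gs i) (y : S.Gs j) :
    S.cMid i j x (QuotientGroup.mk y) =
      QuotientGroup.mk ⟨⁅(x : G), (y : G)⁆, S.mem_comm x.2 y.2⟩ := rfl

lemma cMid_mul (i j : ℕ) (x₁ x₂ : S.Gs i) (q : S.Qm j) :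
    S.cMid i j (x₁ * x₂) q = S.cMid i j x₁ q * S.cMid i j x₂ q := by
  induction q using QuotientGroup.induction_on with | _ y =>
  rw [cMid_mk, cMid_mk, cMid_mk, S.qm_comm, ← QuotientGroup.mk_mul]
  apply QuotientGroup.eq.mpr
  rw [Subgroup.mem_subgroupOf]
  push_cast
  exact S.add_left_congr x₂.2 y.2

lemma cMid_ker (i j : ℕ) {x : S.Gs i} (hx : x ∈ S.K i) (q : S.Qm j) :
    S.cMid i j x q = 1 := by
  induction q using QuotientGroup.induction_on with | _ y =>
  rw [cMid_mk]
  apply (QuotientGroup.eq_one_iff _).mpr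
  rw [Subgroup.mem_subgroupOf] at hx ⊢
  exact S.ker_left hx y.2

def cOuterMul (i j : ℕ) : S.Gs i →* Multiplicative (S.Q j →+ S.Q (i + j)) where
  toFun x := Multiplicative.ofAdd (MonoidHom.toAdditive (S.cMid i j x))
  map_one' := by
    apply Multiplicative.toAdd.injective
    refine AddMonoidHom.ext fun q => ?_
    show Additive.ofMul (S.cMid i j 1 (Additive.toMul q)) = 0
    have h1 : S.cMid i j 1 (Additive.toMul q) = 1 := by
      induction (Additive.toMul q) using QuotientGroup.induction_on with | _ y =>
      rw [cMid_mk]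
      apply (QuotientGroup.eq_one_iff _).mpr
      rw [Subgroup.mem_subgroupOf]
      simpa using one_mem _
    rw [h1]; rfl
  map_mul' x₁ x₂ := by
    apply Multiplicative.toAdd.injective
    refine AddMonoidHom.ext fun q => ?_
    show Additive.ofMul (S.cMid i j (x₁ * x₂) (Additive.toMul q)) =
      Additive.ofMul (S.cMid i j x₁ (Additive.toMul q)) +
      Additive.ofMul (S.cMid i j x₂ (Additive.toMul q))
    rw [S.cMid_mul]; rfl

lemma cOuterMul_ker (i j : ℕ) {x : S.Gs i} (hx : x ∈ S.K i) : S.cOuterMul i j x = 1 := by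
  apply Multiplicative.toAdd.injective
  refine AddMonoidHom.ext fun q => ?_
  show Additive.ofMul (S.cMid i j x (Additive.toMul q)) = 0
  rw [S.cMid_ker i j hx]; rfl

def cQ (i j : ℕ) : S.Q i →+ (S.Q j →+ S.Q (i + j)) :=
  MonoidHom.toAdditiveLeft
    (QuotientGroup.lift (S.K i) (S.cOuterMul i j) (fun _ h => S.cOuterMul_ker i j h))

lemma cQ_mk {i j : ℕ} {g h : G} (hg : g ∈ S.Gs i) (hh : h ∈ S.Gs j) :
    S.cQ i j (S.mkQ i g hg) (S.mkQ j h hh) =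
      S.mkQ (i + j) ⁅g, h⁆ (S.mem_comm hg hh) := rfl


def brInner (i : ℕ) (x : S.Q i) : S.L →+ S.L :=
  DirectSum.toAddMonoid fun j => (DirectSum.of S.Q (i + j)).comp (S.cQ i j x)

def brOuter (i : ℕ) : S.Q i →+ (S.L →+ S.L) where
  toFun := S.brInner i
  map_zero' := by
    apply DirectSum.addHom_ext
    intro j y
    simp [brInner, DirectSum.toAddMonoid_of]
  map_add' x₁ x₂ := by
    apply DirectSum.addHom_ext
    intro j y
    simp [brInner, DirectSum.toAddMonoid_of]

/-- The bracket, as a bi-additive map. -/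
def br : S.L →+ S.L →+ S.L := DirectSum.toAddMonoid S.brOuter

lemma br_of {i j : ℕ} (x : S.Q i) (y : S.Q j) :
    S.br (DirectSum.of S.Q i x) (DirectSum.of S.Q j y) =
      DirectSum.of S.Q (i + j) (S.cQ i j x y) := by
  simp [br, brOuter, brInner, DirectSum.toAddMonoid_of]

def e (n : ℕ) (g : G) (hg : g ∈ S.Gs n) : S.L := DirectSum.of S.Q n (S.mkQ n g hg)

lemma br_e {i j : ℕ} {g h : G} (hg : g ∈ S.Gs i) (hh : h ∈ S.Gs j) :
    S.br (S.e i g hg) (S.e j h hh) = S.e (i + j) ⁅g, h⁆ (S.mem_comm hg hh) := by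
  rw [e, e, e, br_of, S.cQ_mk]

lemma e_congr {n m : ℕ} (h : n = m) (g : G) (hg : g ∈ S.Gs n) (hg' : g ∈ S.Gs m) :
    S.e n g hg = S.e m g hg' := by subst h; rfl

lemma e_add {n : ℕ} {g h : G} (hg : g ∈ S.Gs n) (hh : h ∈ S.Gs n) :
    S.e n g hg + S.e n h hh = S.e n (g * h) (mul_mem hg hh) := by
  rw [e, e, e, S.mkQ_mul, map_add]

lemma e_one (n : ℕ) (h : (1 : G) ∈ S.Gs n) : S.e n 1 h = 0 := by
  have : S.mkQ n 1 h = 0 := rfl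
  rw [e, this, map_zero]

lemma e_inv {n : ℕ} {g : G} (hg : g ∈ S.Gs n) :
    S.e n g⁻¹ (inv_mem hg) = - S.e n g hg := by
  have : S.mkQ n g⁻¹ (inv_mem hg) = - S.mkQ n g hg := rfl
  rw [e, this, map_neg, e]

lemma e_of_eq {n : ℕ} {g g' : G} (h : g = g') (hg : g ∈ S.Gs n) (hg' : g' ∈ S.Gs n) :
    S.e n g hg = S.e n g' hg' := by subst h; rfl

lemma e_eq {n : ℕ} {g g' : G} (hg : g ∈ S.Gs n) (hg' : g' ∈ S.Gs n)
    (h : g⁻¹ * g' ∈ S.Gs (n + 1)) : S.e n g hg = S.e n g' hg' := by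
  rw [e, e, S.mkQ_congr hg hg' h]

lemma of_zero_eq_zero (a : S.Q 0) : DirectSum.of S.Q 0 a = 0 := by
  rw [S.q0_eq_zero a, map_zero]

lemma br_antisym (x y : S.L) : S.br x y = - S.br y x := by
  induction x using DirectSum.induction_on with
  | zero => simp
  | of i a =>
    induction y using DirectSum.induction_on with
    | zero => simp
    | of j b =>
      obtain ⟨g, hg, rfl⟩ := S.mkQ_surjective i a
      obtain ⟨h, hh, rfl⟩ := S.mkQ_surjective j b
      show S.br (S.e i g hg) (S.e j h hh) = - S.br (S.e j h hh) (S.e i g hg)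
      have m2 : ⁅h, g⁆ ∈ S.Gs (i + j) := by
        rw [Nat.add_comm]; exact S.mem_comm hh hg
      rw [S.br_e hg hh, S.br_e hh hg,
        S.e_congr (Nat.add_comm j i) ⁅h, g⁆ (S.mem_comm hh hg) m2,
        S.e_of_eq (commutatorElement_inv g h).symm m2 (inv_mem (S.mem_comm hg hh)),
        S.e_inv, neg_neg]
    | add u v hu hv =>
      simp only [map_add, AddMonoidHom.add_apply, hu, hv]
      abel
  | add u v hu hv =>
    simp only [map_add, AddMonoidHom.add_apply, hu, hv]
    abel

lemma br_self (x : S.L) : S.br x x = 0 := by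
  induction x using DirectSum.induction_on with
  | zero => simp
  | of i a =>
    obtain ⟨g, hg, rfl⟩ := S.mkQ_surjective i a
    show S.br (S.e i g hg) (S.e i g hg) = 0
    rw [S.br_e hg hg, S.e_of_eq (show ⁅g, g⁆ = (1 : G) by group) _ (one_mem _), S.e_one]
  | add u v hu hv =>
    simp only [map_add, AddMonoidHom.add_apply, hu, hv, S.br_antisym v u]
    abel

lemma br_leibniz (x y z : S.L) :
    S.br x (S.br y z) = S.br (S.br x y) z + S.br y (S.br x z) := by
  induction x using DirectSum.induction_on with
  | zero => simp
  | add u v hu hv =>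
    simp only [map_add, AddMonoidHom.add_apply, hu, hv]
    abel
  | of i a =>
  induction y using DirectSum.induction_on with
  | zero => simp
  | add u v hu hv =>
    simp only [map_add, AddMonoidHom.add_apply, hu, hv]
    abel
  | of j b =>
  induction z using DirectSum.induction_on with
  | zero => simp
  | add u v hu hv =>
    simp only [map_add, AddMonoidHom.add_apply, hu, hv]
    abel
  | of k c =>
  rcases Nat.eq_zero_or_pos i with hi | hi
  · subst hi
    rw [S.of_zero_eq_zero a]
    simp
  rcases Nat.eq_zero_or_pos j with hj | hj
  · subst hj
    rw [S.of_zero_eq_zero b]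
    simp
  rcases Nat.eq_zero_or_pos k with hk | hk
  · subst hk
    rw [S.of_zero_eq_zero c]
    simp
  obtain ⟨g, hg, rfl⟩ := S.mkQ_surjective i a
  obtain ⟨h, hh, rfl⟩ := S.mkQ_surjective j b
  obtain ⟨w, hw, rfl⟩ := S.mkQ_surjective k c
  show S.br (S.e i g hg) (S.br (S.e j h hh) (S.e k w hw)) =
    S.br (S.br (S.e i g hg) (S.e j h hh)) (S.e k w hw) +
      S.br (S.e j h hh) (S.br (S.e i g hg) (S.e k w hw))
  rw [S.br_e hh hw, S.br_e hg (S.mem_comm hh hw),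
    S.br_e hg hh, S.br_e (S.mem_comm hg hh) hw,
    S.br_e hg hw, S.br_e hh (S.mem_comm hg hw)]
  have mA : ⁅g, ⁅h, w⁆⁆ ∈ S.Gs (i + j + k) := by
    have := S.mem_comm hg (S.mem_comm hh hw)
    rwa [show i + (j + k) = i + j + k by omega] at this
  have mB : ⁅⁅g, h⁆, w⁆ ∈ S.Gs (i + j + k) := S.mem_comm (S.mem_comm hg hh) hw
  have mC : ⁅h, ⁅g, w⁆⁆ ∈ S.Gs (i + j + k) := by
    have := S.mem_comm hh (S.mem_comm hg hw)
    rwa [show j + (i + k) = i + j + k by omega] at this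
  rw [S.e_congr (show i + (j + k) = i + j + k by omega) _ _ mA,
    S.e_congr (show j + (i + k) = i + j + k by omega) _ _ mC,
    S.e_add mB mC]
  exact S.e_eq mA _ (S.jacobi_congr hi hj hk hg hh hw)


instance : LieRing S.L :=
  { (inferInstance : AddCommGroup S.L) with
    bracket := fun x y => S.br x y
    add_lie := fun x y z => by
      show S.br (x + y) z = S.br x z + S.br y z
      simp only [map_add, AddMonoidHom.add_apply]
    lie_add := fun x y z => by
      show S.br x (y + z) = S.br x y + S.br x z
      simp only [map_add]
    lie_self := fun x => S.br_self x
    leibniz_lie := fun x y z => S.br_leibniz x y z }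

def phi (i : ℕ) : S.Gs i →* Multiplicative S.L where
  toFun x := Multiplicative.ofAdd (S.e i x x.2)
  map_one' := congrArg Multiplicative.ofAdd (S.e_one i (one_mem _))
  map_mul' x y := by
    apply Multiplicative.toAdd.injective
    exact (S.e_add x.2 y.2).symm

lemma phi_eq_one_iff (i : ℕ) (x : S.Gs i) : S.phi i x = 1 ↔ (x : G) ∈ S.Gs (i + 1) := by
  constructor
  · intro h
    have h2 : S.e i x x.2 = 0 := congrArg Multiplicative.toAdd h
    have h3 : S.mkQ i (x : G) x.2 = 0 := by
      have := congrArg (fun w : S.L => w i) h2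
      simpa [e, DirectSum.of_eq_same] using this
    have h4 : (QuotientGroup.mk (⟨(x : G), x.2⟩ : S.Gs i) : S.Qm i) = 1 :=
      Additive.ofMul.injective h3
    have h5 := (QuotientGroup.eq_one_iff _).mp h4
    rwa [Subgroup.mem_subgroupOf] at h5
  · intro h
    have h4 : (QuotientGroup.mk (⟨(x : G), x.2⟩ : S.Gs i) : S.Qm i) = 1 :=
      (QuotientGroup.eq_one_iff _).mpr (by rwa [Subgroup.mem_subgroupOf])
    show Multiplicative.ofAdd (S.e i x x.2) = 1
    have h0 : S.mkQ i (x : G) x.2 = 0 := congrArg Additive.ofMul h4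
    rw [e, h0, map_zero]
    rfl

lemma gen : AddSubgroup.closure
    (⋃ i ∈ {i : ℕ | 1 ≤ i},
      Set.range fun x : S.Gs i => Multiplicative.toAdd (S.phi i x)) = ⊤ := by
  rw [eq_top_iff]
  rintro x -
  induction x using DirectSum.induction_on with
  | zero => exact zero_mem _
  | of i a =>
    rcases Nat.eq_zero_or_pos i with hi | hi
    · subst hi; rw [S.of_zero_eq_zero a]; exact zero_mem _
    · obtain ⟨g, hg, rfl⟩ := S.mkQ_surjective i a
      apply AddSubgroup.subset_closure
      exact Set.mem_biUnion hi ⟨⟨g, hg⟩, rfl⟩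
  | add u v hu hv => exact add_mem hu hv

lemma indep : iSupIndep fun i : {i : ℕ // 1 ≤ i} =>
    AddSubgroup.closure
      (Set.range fun x : S.Gs (i : ℕ) => Multiplicative.toAdd (S.phi i x)) := by
  have hcl : ∀ i : ℕ,
      AddSubgroup.closure (Set.range fun x : S.Gs i => Multiplicative.toAdd (S.phi i x))
        = (DirectSum.of S.Q i).range := by
    intro i
    have hr : (Set.range fun x : S.Gs i => Multiplicative.toAdd (S.phi i x))
        = Set.range (DirectSum.of S.Q i) := by
      ext w
      constructor
      · rintro ⟨x, rfl⟩; exact ⟨S.mkQ i x x.2, rfl⟩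
      · rintro ⟨q, rfl⟩
        obtain ⟨g, hg, rfl⟩ := S.mkQ_surjective i q
        exact ⟨⟨g, hg⟩, rfl⟩
    rw [hr, ← AddMonoidHom.coe_range, AddSubgroup.closure_eq]
  intro i₀
  simp only [hcl]
  rw [AddSubgroup.disjoint_def]
  intro x hx hsup
  obtain ⟨q, rfl⟩ := hx
  let P : S.L →+ S.Q (i₀ : ℕ) :=
    { toFun := fun w => w (i₀ : ℕ)
      map_zero' := rfl
      map_add' := fun a b => by simp }
  have hle : (⨆ (j : {i : ℕ // 1 ≤ i}) (_ : j ≠ i₀), (DirectSum.of S.Q (j : ℕ)).range)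
      ≤ P.ker := by
    apply iSup_le
    intro j
    apply iSup_le
    intro hj
    rintro w ⟨q', rfl⟩
    show (DirectSum.of S.Q (j : ℕ) q') (i₀ : ℕ) = 0
    exact DirectSum.of_eq_of_ne _ _ _ (fun h => hj (Subtype.ext h.symm))
  have h0 : (DirectSum.of S.Q (i₀ : ℕ) q) (i₀ : ℕ) = 0 := hle hsup
  rw [DirectSum.of_eq_same] at h0
  rw [h0, map_zero]


end NS
end AssocLieAux

/-- given an `N`-series `G = G₁ ≥ G₂ ≥ ⋯` (i.e. `[G_i, G_j] ≤ G_{i+j}`),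
the direct sum `⊕ G_i/G_{i+1}` with bracket induced by group commutation is a
well-defined Lie ring. -/
theorem associated_lie_ring_exists
    (G : Type) [Group G] (Gs : ℕ → Subgroup G)
    (h1 : Gs 1 = ⊤)
    (hdesc : ∀ i, 1 ≤ i → Gs (i + 1) ≤ Gs i)
    (hcomm : ∀ i j, 1 ≤ i → 1 ≤ j → ∀ x ∈ Gs i, ∀ y ∈ Gs j, ⁅x, y⁆ ∈ Gs (i + j)) :
    Nonempty (AssociatedLieRing G Gs hcomm) := by
  let S : AssocLieAux.NS G := ⟨Gs, h1, hdesc, hcomm⟩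
  exact ⟨{ L := S.L
           instL := inferInstance
           φ := S.phi
           ker_eq := fun i _ x => S.phi_eq_one_iff i x
           bracket_eq := fun i j hi hj x y => (S.br_e x.2 y.2).symm
           generates := S.gen
           indep := S.indep }⟩
end

section
/- Let G be a finite group with an N-series (G_i) and let α be an automorphism of G preserving each G_i with gcd(|α|,|G|)=1. Then the subring of fixed points of the induced automorphism of the associated Lie ring L = ⊕ G_i/G_{i+1} coincides with the Lie ring associated to C_G(α) via the series (C_G(α) ∩ G_i). -/
open scoped commutatorElement

/-- Key lemma: a coprime automorphism has a fixed point in every invariant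
coset of an invariant subgroup. -/
theorem coset_fixed (n : ℕ) (G : Type) [Group G] [Finite G] (α : MulAut G)
    (hn : orderOf α ∣ n) (hcop : Nat.Coprime n (Nat.card G))
    (N : Subgroup G) (hN : ∀ g ∈ N, α g ∈ N)
    (x : G) (hx : α x * x⁻¹ ∈ N) : ∃ y : G, α y = y ∧ y * x⁻¹ ∈ N := by
  rcases Nat.lt_or_ge n 2 with h2 | h2
  · -- trivial cases n = 0 or n = 1
    refine ⟨x, ?_, by simpa using N.one_mem⟩
    interval_cases n
    · have hG1 : Nat.card G = 1 := Nat.coprime_zero_left _ |>.mp hcop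
      have : Subsingleton G := (Nat.card_eq_one_iff_unique.mp hG1).1
      exact Subsingleton.elim _ _
    · have : α = 1 := orderOf_eq_one_iff.mp (Nat.dvd_one.mp hn)
      rw [this]; rfl
  · set p := n.minFac with hpdef
    have hpprime : p.Prime := Nat.minFac_prime (by omega)
    set k := n / p with hkdef
    have hpk : p * k = n := Nat.mul_div_cancel' n.minFac_dvd
    have hklt : k < n := Nat.div_lt_self (by omega) hpprime.one_lt
    set β := α ^ k with hβdef
    have hβp : β ^ p = 1 := by
      rw [hβdef, ← pow_mul, mul_comm, hpk]
      exact orderOf_dvd_iff_pow_eq_one.mp hn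
    have hoβ : orderOf β ∣ p := orderOf_dvd_of_pow_eq_one hβp
    have hoβpos : 0 < orderOf β := Nat.pos_of_ne_zero (by
      intro h; exact hpprime.ne_zero (Nat.eq_zero_of_zero_dvd (h ▸ hoβ)))
    have hcomm : Commute α β := (Commute.refl α).pow_right k
    have hβα : ∀ g : G, β (α g) = α (β g) := by
      intro g
      have := congrArg (fun σ : MulAut G => σ g) hcomm.symm.eq
      simpa [MulAut.mul_apply] using this
    -- the coset is invariant under powers of α
    have αS : ∀ g, g * x⁻¹ ∈ N → α g * x⁻¹ ∈ N := by
      intro g hg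
      have h1 : α (g * x⁻¹) ∈ N := hN _ hg
      have : α g * x⁻¹ = α (g * x⁻¹) * (α x * x⁻¹) := by
        rw [map_mul, map_inv]; group
      rw [this]; exact N.mul_mem h1 hx
    have powS : ∀ m : ℕ, ∀ g, g * x⁻¹ ∈ N → (α ^ m) g * x⁻¹ ∈ N := by
      intro m
      induction m with
      | zero => intro g hg; simpa using hg
      | succ m ih =>
        intro g hg
        have : (α ^ (m + 1)) g = α ((α ^ m) g) := by
          rw [pow_succ']; rfl
        rw [this]; exact αS _ (ih g hg)
    have zS : ∀ γ ∈ Subgroup.zpowers β, ∀ g, g * x⁻¹ ∈ N → γ g * x⁻¹ ∈ N := by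
      intro γ hγ g hg
      obtain ⟨j, hj⟩ := hγ
      set m := (j % (orderOf β : ℤ)).toNat with hm
      have hmz : (m : ℤ) = j % (orderOf β : ℤ) :=
        Int.toNat_of_nonneg (Int.emod_nonneg j (by exact_mod_cast hoβpos.ne'))
      have hγ' : γ = β ^ m := by
        rw [← hj, ← zpow_natCast, hmz, zpow_mod_orderOf]
      have : β ^ m = α ^ (k * m) := by rw [hβdef, ← pow_mul]
      rw [hγ', this]
      exact powS _ g hg
    -- set up the action of zpowers β on the coset
    let S := {g : G // g * x⁻¹ ∈ N}
    let A := Subgroup.zpowers β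
    letI : MulAction A S :=
      { smul := fun γ g => ⟨(γ : MulAut G) g.1, zS γ γ.2 g.1 g.2⟩
        one_smul := fun g => rfl
        mul_smul := fun γ δ g => rfl }
    haveI : Fact p.Prime := ⟨hpprime⟩
    have hA : IsPGroup p A := by
      intro γ
      refine ⟨1, Subtype.ext ?_⟩
      obtain ⟨j, hj⟩ := γ.2
      rw [Subgroup.coe_pow]
      show (γ : MulAut G) ^ (p ^ 1) = 1
      rw [pow_one, ← hj, ← zpow_natCast, ← zpow_mul, mul_comm, zpow_mul,
        zpow_natCast, hβp, one_zpow]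
    have hcardS : Nat.card S = Nat.card N := by
      refine Nat.card_congr ⟨fun g => ⟨g.1 * x⁻¹, g.2⟩,
        fun m => ⟨m.1 * x, by simpa using m.2⟩, fun g => ?_, fun m => ?_⟩
      · ext; simp
      · ext; simp
    have hpS : ¬ p ∣ Nat.card S := by
      intro hdvd
      rw [hcardS] at hdvd
      have h1 : p ∣ Nat.card G := hdvd.trans N.card_subgroup_dvd_card
      have h2 : p ∣ Nat.gcd n (Nat.card G) := Nat.dvd_gcd n.minFac_dvd h1
      rw [hcop] at h2
      exact hpprime.one_lt.ne' (Nat.dvd_one.mp h2)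
    obtain ⟨⟨y, hyS⟩, hyfix⟩ := hA.nonempty_fixed_point_of_prime_not_dvd_card S hpS
    have hyβ : β y = y := congrArg Subtype.val (hyfix ⟨β, Subgroup.mem_zpowers β⟩)
    -- the fixed-point subgroup of β
    let H : Subgroup G :=
      { carrier := {g | β g = g}
        one_mem' := map_one β
        mul_mem' := fun {a b} ha hb => by
          show β (a * b) = a * b
          rw [map_mul, ha, hb]
        inv_mem' := fun {a} ha => by
          show β a⁻¹ = a⁻¹
          rw [map_inv, ha] }
    have hmemH : ∀ g : G, g ∈ H ↔ β g = g := fun g => Iff.rfl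
    have hαH : ∀ g : G, g ∈ H → α g ∈ H := by
      intro g hg
      show β (α g) = α g
      rw [hβα, hg]
    have hαinvH : ∀ g : G, g ∈ H → α⁻¹ g ∈ H := by
      intro g hg
      show β (α⁻¹ g) = α⁻¹ g
      have : β (α⁻¹ g) = α⁻¹ (β g) := by
        have := congrArg (fun σ : MulAut G => σ g) (hcomm.inv_left.symm.eq)
        simpa [MulAut.mul_apply] using this
      rw [this, hg]
    let α' : MulAut ↥H :=
      { toFun := fun g => ⟨α g.1, hαH g.1 g.2⟩
        invFun := fun g => ⟨α⁻¹ g.1, hαinvH g.1 g.2⟩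
        left_inv := fun g => Subtype.ext (by
          show α⁻¹ (α g.1) = g.1
          rw [MulAut.inv_def, MulEquiv.symm_apply_apply])
        right_inv := fun g => Subtype.ext (by
          show α (α⁻¹ g.1) = g.1
          rw [MulAut.inv_def, MulEquiv.apply_symm_apply])
        map_mul' := fun a b => Subtype.ext (map_mul α _ _) }
    have hα'pow : ∀ (m : ℕ) (g : ↥H), ((α' ^ m) g : G) = (α ^ m) g.1 := by
      intro m
      induction m with
      | zero => intro g; rfl
      | succ m ih =>
        intro g
        have h1 : (α' ^ (m + 1)) g = α' ((α' ^ m) g) := by rw [pow_succ']; rfl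
        have h2 : (α ^ (m + 1)) g.1 = α ((α ^ m) g.1) := by rw [pow_succ']; rfl
        rw [h1, h2, ← ih g]
        rfl
    have hα'k : orderOf α' ∣ k := by
      apply orderOf_dvd_of_pow_eq_one
      ext g
      exact (hα'pow k g).trans g.2
    have hcop' : Nat.Coprime k (Nat.card ↥H) :=
      Nat.Coprime.coprime_dvd_left ⟨p, by rw [mul_comm, hpk]⟩
        (Nat.Coprime.coprime_dvd_right H.card_subgroup_dvd_card hcop)
    have hyH : y ∈ H := hyβ
    have hαyN : α y * y⁻¹ ∈ N := by
      have h1 : α y * x⁻¹ ∈ N := αS y hyS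
      have : α y * y⁻¹ = (α y * x⁻¹) * (y * x⁻¹)⁻¹ := by group
      rw [this]; exact N.mul_mem h1 (N.inv_mem hyS)
    obtain ⟨z, hz1, hz2⟩ := coset_fixed k ↥H α' hα'k hcop' (N.subgroupOf H)
      (fun g hg => by
        rw [Subgroup.mem_subgroupOf] at hg ⊢
        exact hN _ hg)
      ⟨y, hyH⟩
      (by rw [Subgroup.mem_subgroupOf]; exact hαyN)
    refine ⟨(z : G), ?_, ?_⟩
    · exact congrArg Subtype.val hz1
    · rw [Subgroup.mem_subgroupOf] at hz2
      have hz2' : (z : G) * y⁻¹ ∈ N := hz2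
      have : (z : G) * x⁻¹ = ((z : G) * y⁻¹) * (y * x⁻¹) := by group
      rw [this]; exact N.mul_mem hz2' hyS
termination_by n



/-- let `G` be a finite group with an `N`-series `(Gs i)`, with associated
Lie ring `L = ⊕ G_i/G_{i+1}` (presented by homomorphisms `φ i : G_i →* L` with kernel
`G_{i+1}`, bracket induced by commutation, additively generating `L` with independent
components).  Let `α` be an automorphism of `G` of order coprime to `|G|` preserving each
`G_i`, and `ψ` the induced automorphism of `L`.  Then in each homogeneous component the
fixed points of `ψ` are exactly the images of elements of `C_G(α) ∩ G_i`; that is, the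
fixed-point subring of `ψ` coincides with the Lie ring associated to `C_G(α)` via the
series `(C_G(α) ∩ G_i)`. -/
theorem fixed_points_of_induced_automorphism
    (G : Type) [Group G] [Finite G] (Gs : ℕ → Subgroup G)
    (h1 : Gs 1 = ⊤)
    (hdesc : ∀ i, 1 ≤ i → Gs (i + 1) ≤ Gs i)
    (hcomm : ∀ i j, 1 ≤ i → 1 ≤ j → ∀ x ∈ Gs i, ∀ y ∈ Gs j, ⁅x, y⁆ ∈ Gs (i + j))
    (L : Type) [LieRing L] (φ : (i : ℕ) → ↥(Gs i) →* Multiplicative L)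
    (hker : ∀ i, 1 ≤ i → ∀ x : ↥(Gs i), φ i x = 1 ↔ (x : G) ∈ Gs (i + 1))
    (hbr : ∀ i j (hi : 1 ≤ i) (hj : 1 ≤ j) (x : ↥(Gs i)) (y : ↥(Gs j)),
      Multiplicative.toAdd (φ (i + j) ⟨⁅(x : G), (y : G)⁆, hcomm i j hi hj x x.2 y y.2⟩) =
        ⁅Multiplicative.toAdd (φ i x), Multiplicative.toAdd (φ j y)⁆)
    (hgen : AddSubgroup.closure
      (⋃ i ∈ {i : ℕ | 1 ≤ i},
        Set.range fun x : ↥(Gs i) => Multiplicative.toAdd (φ i x)) = ⊤)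
    (hindep : iSupIndep fun i : {i : ℕ // 1 ≤ i} =>
      AddSubgroup.closure
        (Set.range fun x : ↥(Gs (i : ℕ)) => Multiplicative.toAdd (φ i x)))
    (α : MulAut G)
    (hcop : Nat.Coprime (orderOf α) (Nat.card G))
    (hinv : ∀ i, ∀ x : G, x ∈ Gs i → α x ∈ Gs i)
    (ψ : L ≃+ L)
    (hψbr : ∀ a b : L, ψ ⁅a, b⁆ = ⁅ψ a, ψ b⁆)
    (hequiv : ∀ i (x : ↥(Gs i)),
      ψ (Multiplicative.toAdd (φ i x)) =
        Multiplicative.toAdd (φ i ⟨α (x : G), hinv i x x.2⟩)) :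
    ∀ i, 1 ≤ i →
      {l : L | (∃ x : ↥(Gs i), Multiplicative.toAdd (φ i x) = l) ∧ ψ l = l} =
      {l : L | ∃ x : ↥(Gs i), α (x : G) = (x : G) ∧ Multiplicative.toAdd (φ i x) = l} := by
  intro i hi
  ext l
  simp only [Set.mem_setOf_eq]
  constructor
  · rintro ⟨⟨x, hxl⟩, hψl⟩
    have hfix : Multiplicative.toAdd (φ i ⟨α (x : G), hinv i x x.2⟩) =
        Multiplicative.toAdd (φ i x) := by
      rw [← hequiv i x, hxl, hψl]
    have hφeq : φ i ⟨α (x : G), hinv i x x.2⟩ = φ i x :=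
      Multiplicative.toAdd.injective hfix
    have hmem : α (x : G) * (x : G)⁻¹ ∈ Gs (i + 1) := by
      have h0 : φ i (⟨α (x : G), hinv i x x.2⟩ * x⁻¹) = 1 := by
        rw [map_mul, map_inv, hφeq, mul_inv_cancel]
      exact (hker i hi _).mp h0
    obtain ⟨y, hy1, hy2⟩ := coset_fixed (orderOf α) G α dvd_rfl hcop (Gs (i + 1))
      (fun g hg => hinv (i + 1) g hg) (x : G) hmem
    have hyGi : y ∈ Gs i := by
      have hy : y = (y * (x : G)⁻¹) * (x : G) := by group
      rw [hy]
      exact (Gs i).mul_mem (hdesc i hi hy2) x.2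
    have hφy : φ i ⟨y, hyGi⟩ = φ i x := by
      have h0 : φ i (⟨y, hyGi⟩ * x⁻¹) = 1 := (hker i hi _).mpr hy2
      rw [map_mul, map_inv] at h0
      exact mul_inv_eq_one.mp h0
    exact ⟨⟨y, hyGi⟩, hy1, by rw [hφy, hxl]⟩
  · rintro ⟨x, hαx, hxl⟩
    refine ⟨⟨x, hxl⟩, ?_⟩
    rw [← hxl, hequiv i x]
    congr 1
    exact congrArg (φ i) (Subtype.ext hαx)
end
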